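/- Let τ₀ be an (F_t)-stopping time on D_exp(S), let 𝒰 be an open subset of S², let h ∈ C(𝒰, ℝ₊) be continuous, and let M : D_exp(S) → [0,∞] be F_{τ₀}-measurable. Then τ := inf{ t ≥ τ₀ : {(X_{τ₀}, X_s)}_{τ₀ ≤ s ≤ t} is not relatively compact in 𝒰, or ∫_{τ₀}^t h(X_{τ₀}, X_s) ds ≥ M } is an (F_t)-stopping time. In particular the explosion time ξ is an (F_t)-stopping time, and for every open U ⊆ S, τ^U := inf{ t ≥ 0 : X_{t−} ∉ U or X_t ∉ U } ≤ ξ is an (F_t)-stopping time. -/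

import Mathlib

set_option linter.unusedSectionVars false
set_option maxHeartbeats 1000000


open Filter Topology Set MeasureTheory
open scoped ENNReal NNReal

noncomputable section

namespace LocSkor

/-- Paths with values in the one-point compactification. -/
abbrev Path (S : Type*) := ℝ → OnePoint S

variable {S : Type*} [TopologicalSpace S]

/-- Distance between two points of `S^Δ`, with junk value `0` if one of them is `Δ`. -/
noncomputable def dd (ρ : S → S → ℝ) : OnePoint S → OnePoint S → ℝ :=
  fun a b => Option.elim (show Option S from a) 0
    (fun a' => Option.elim (show Option S from b) 0 (fun b' => ρ a' b'))

/-- The set of times at which the path has already exploded. -/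
def xiSet (x : Path S) : Set ℝ := {t : ℝ | x t = OnePoint.infty}

/-- The path explodes in finite time, i.e. `ξ(x) < ∞`. -/
def explodes (x : Path S) : Prop := (xiSet x).Nonempty

/-- The (real-valued) explosion time `ξ(x)`; junk value `0` if the path never explodes. -/
def xiR (x : Path S) : ℝ := sInf (xiSet x)

/-- The `[0,∞]`-valued explosion time `ξ(x)`. -/
def xiE (x : Path S) : ℝ≥0∞ := ⨅ t ∈ xiSet x, ENNReal.ofReal t

/-- The range `{x_s, 0 ≤ s < ξ(x)}` of the path, as a subset of `S`. -/
def pathRange (x : Path S) : Set S := {a : S | ∃ s : ℝ, 0 ≤ s ∧ x s = (a : OnePoint S)}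

/-- `x` is an exploding cadlag path: `x_t = Δ` exactly for `t ≥ ξ(x)` (and we normalize
`x` on negative times), `x` is right-continuous before explosion, and has left limits in `S`
at every point of `(0, ξ(x))`. -/
def IsDexp (x : Path S) : Prop :=
  (∀ t ≤ (0:ℝ), x t = x 0) ∧
  (∀ ⦃s t : ℝ⦄, s ≤ t → x s = OnePoint.infty → x t = OnePoint.infty) ∧
  IsClosed (xiSet x) ∧
  (∀ t : ℝ, 0 ≤ t → x t ≠ OnePoint.infty → Tendsto x (𝓝[>] t) (𝓝 (x t))) ∧
  (∀ t : ℝ, 0 < t → x t ≠ OnePoint.infty →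
    ∃ a : S, Tendsto x (𝓝[<] t) (𝓝 (a : OnePoint S)))

/-- `x` belongs to the local cadlag space `𝔻_loc(S)`. -/
def IsDloc (x : Path S) : Prop :=
  IsDexp x ∧
  ((explodes x ∧ 0 < xiR x ∧ IsCompact (closure (pathRange x))) →
    ∃ a : S, Tendsto x (𝓝[<] xiR x) (𝓝 (a : OnePoint S)))

/-- `x` belongs to the global cadlag space `𝔻(S)`, i.e. `ξ(x) = ∞`. -/
def IsDglob (x : Path S) : Prop := IsDexp x ∧ ∀ t : ℝ, x t ≠ OnePoint.infty

/-- `x` is a cadlag path with values in the compact space `S^Δ`, i.e. `x ∈ 𝔻(S^Δ)`. -/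
def IsCadlagDelta (x : Path S) : Prop :=
  (∀ t ≤ (0:ℝ), x t = x 0) ∧
  (∀ t : ℝ, 0 ≤ t → Tendsto x (𝓝[>] t) (𝓝 (x t))) ∧
  (∀ t : ℝ, 0 < t → ∃ a : OnePoint S, Tendsto x (𝓝[<] t) (𝓝 a))

/-- The space `𝔻_exp(S)` of exploding cadlag paths. -/
def DexpT (S : Type*) [TopologicalSpace S] : Type _ := {x : Path S // IsDexp x}

/-- The space `𝔻_loc(S)`. -/
def DlocT (S : Type*) [TopologicalSpace S] : Type _ := {x : Path S // IsDloc x}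

/-- The space `𝔻(S)`. -/
def DglobT (S : Type*) [TopologicalSpace S] : Type _ := {x : Path S // IsDglob x}

/-- The space `𝔻(S^Δ)`. -/
def DDeltaT (S : Type*) [TopologicalSpace S] : Type _ := {x : Path S // IsCadlagDelta x}

/-! ### Time changes `Λ̃` and `Λ` -/

/-- `l` is an increasing bijection of `ℝ₊` (extended by the identity on negative reals):
the class `Λ̃`. -/
def IsTimeBij (l : ℝ → ℝ) : Prop :=
  StrictMono l ∧ Function.Surjective l ∧ ∀ t ≤ (0:ℝ), l t = t

/-- `‖log λ̇‖_t ≤ ε`, expressed through slopes. -/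
def LogSlopeLe (l : ℝ → ℝ) (t ε : ℝ) : Prop :=
  ∀ s₁ s₂ : ℝ, 0 ≤ s₁ → s₁ < s₂ → s₂ ≤ t → |Real.log ((l s₂ - l s₁) / (s₂ - s₁))| ≤ ε

/-- `‖λ - id‖_t ≤ ε`. -/
def IdDistLe (l : ℝ → ℝ) (t ε : ℝ) : Prop := ∀ s : ℝ, 0 ≤ s → s ≤ t → |l s - s| ≤ ε

/-- `l` belongs to the class `Λ` of increasing bijections of `ℝ₊` which are locally
Lipschitz together with their inverses (equivalently, `‖log λ̇‖_t < ∞` for all `t`). -/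
def IsLipTimeBij (l : ℝ → ℝ) : Prop :=
  IsTimeBij l ∧ ∀ t : ℝ, 0 < t → ∃ C : ℝ, LogSlopeLe l t C

/-- `ξ(x) < ∞` together with the relative compactness in `S` of `{x_s, s < ξ(x)}`. -/
def Case1 (x : Path S) : Prop := explodes x ∧ IsCompact (closure (pathRange x))

/-- Convergence criterion of Theorem 2.6, parametrized by the class of time changes and
by the norm used on them. -/
def ConvGen (ρ : S → S → ℝ) (Lam : (ℝ → ℝ) → Prop) (Nrm : (ℝ → ℝ) → ℝ → ℝ → Prop)
    (xk : ℕ → Path S) (x : Path S) : Prop :=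
  ∃ l : ℕ → ℝ → ℝ, (∀ k, Lam (l k)) ∧
    (Case1 x →
      ((∀ᶠ k in atTop, ∀ s : ℝ, 0 ≤ s → s < l k (xiR x) → xk k s ≠ OnePoint.infty) ∧
      (∀ ε > (0:ℝ), ∀ᶠ k in atTop, ∀ s : ℝ, 0 ≤ s → s < xiR x →
        dd ρ (x s) (xk k (l k s)) ≤ ε) ∧
      Tendsto (fun k => xk k (l k (xiR x))) atTop (𝓝 (OnePoint.infty : OnePoint S)) ∧
      (∀ ε > (0:ℝ), ∀ᶠ k in atTop, Nrm (l k) (xiR x) ε))) ∧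
    (¬ Case1 x →
      ∀ t : ℝ, 0 ≤ t → x t ≠ OnePoint.infty →
        ((∀ᶠ k in atTop, xk k (l k t) ≠ OnePoint.infty) ∧
        (∀ ε > (0:ℝ), ∀ᶠ k in atTop, ∀ s : ℝ, 0 ≤ s → s ≤ t →
          dd ρ (x s) (xk k (l k s)) ≤ ε) ∧
        (∀ ε > (0:ℝ), ∀ᶠ k in atTop, Nrm (l k) t ε)))

/-- Convergence criterion of Theorem 2.6 (with `Λ` and `‖log λ̇‖`). -/
def ConvLoc (ρ : S → S → ℝ) (xk : ℕ → Path S) (x : Path S) : Prop :=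
  ConvGen ρ IsLipTimeBij LogSlopeLe xk x

/-- Convergence criterion of Theorem 2.7 (with `Λ̃` and `‖λ - id‖`). -/
def ConvLocTilde (ρ : S → S → ℝ) (xk : ℕ → Path S) (x : Path S) : Prop :=
  ConvGen ρ IsTimeBij IdDistLe xk x

/-! ### σ-algebras -/

/-- The Borel σ-algebra of `S^Δ`. -/
def msOP (S : Type*) [TopologicalSpace S] : MeasurableSpace (OnePoint S) := borel _

/-- The σ-algebra `𝓕_t = σ(X_s, 0 ≤ s ≤ t)`. -/
def filt {α : Type*} (ev : α → Path S) (t : ℝ) : MeasurableSpace α :=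
  ⨆ s ∈ Icc (0:ℝ) t, MeasurableSpace.comap (fun x => ev x s) (msOP S)

/-- The σ-algebra `𝓕_{t-} = σ(X_s, 0 ≤ s < t)`. -/
def filtLt {α : Type*} (ev : α → Path S) (t : ℝ) : MeasurableSpace α :=
  ⨆ s ∈ Ico (0:ℝ) t, MeasurableSpace.comap (fun x => ev x s) (msOP S)

/-- The σ-algebra `𝓕 = σ(X_s, 0 ≤ s < ∞)`. -/
def filtAll {α : Type*} (ev : α → Path S) : MeasurableSpace α :=
  ⨆ s ∈ Ici (0:ℝ), MeasurableSpace.comap (fun x => ev x s) (msOP S)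

/-- The σ-algebra `𝓕_{t+} = ⋂_{s>t} 𝓕_s`. -/
def filtPlus {α : Type*} (ev : α → Path S) (t : ℝ) : MeasurableSpace α :=
  ⨅ s ∈ Ioi t, filt ev s

/-- `τ` is an `(𝓕_t)`-stopping time. -/
def IsStopping {α : Type*} (ev : α → Path S) (τ : α → ℝ≥0∞) : Prop :=
  ∀ t : ℝ, 0 ≤ t → MeasurableSet[filt ev t] {x | τ x ≤ ENNReal.ofReal t}

open Classical in
/-- Evaluation of a path at a `[0,∞]`-valued time (`Δ` at time `∞`). -/
def evalE (x : Path S) (t : ℝ≥0∞) : OnePoint S :=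
  if t = ⊤ then OnePoint.infty else x t.toReal

open Classical in
/-- The left limit `x_{t-}`, junk value `Δ` if it does not exist. -/
def leftLimVal (x : Path S) (t : ℝ) : OnePoint S :=
  if h : ∃ a : OnePoint S, Tendsto x (𝓝[<] t) (𝓝 a) then h.choose else OnePoint.infty

/-- The exit time `τ^U = inf {t ≥ 0 | X_{t-} ∉ U or X_t ∉ U}`. -/
def tauU (U : Set S) (x : Path S) : ℝ≥0∞ :=
  ⨅ t ∈ {t : ℝ | 0 ≤ t ∧
      ((0 < t ∧ ¬ ∃ a ∈ U, Tendsto x (𝓝[<] t) (𝓝 (a : OnePoint S))) ∨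
        ¬ ∃ a ∈ U, x t = (a : OnePoint S))},
    ENNReal.ofReal t

/-! ### The modulus `ω'` -/

/-- The modulus of continuity `ω'_{t,K,x}(δ)` of (2.5), with values in `[0,∞]`. -/
def omegaMod (ρ : S → S → ℝ) (t : ℝ) (K : Set S) (x : Path S) (δ : ℝ) : ℝ≥0∞ :=
  ⨅ (p : ℕ × (ℕ → ℝ)) (_ : p.2 0 = 0 ∧ (∀ i < p.1, p.2 i + δ < p.2 (i + 1)) ∧
      (∀ s : ℝ, 0 ≤ s → s < p.2 p.1 → x s ≠ OnePoint.infty) ∧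
      ¬ (p.2 p.1 ≤ t ∧ ∃ a ∈ K, x (p.2 p.1) = (a : OnePoint S))),
    ⨆ (i : ℕ) (_ : i < p.1) (s₁ : ℝ) (_ : p.2 i ≤ s₁ ∧ s₁ < p.2 (i + 1))
      (s₂ : ℝ) (_ : p.2 i ≤ s₂ ∧ s₂ < p.2 (i + 1)),
      ENNReal.ofReal (dd ρ (x s₁) (x s₂))

/-! ### Skorokhod pseudo-metrics -/

open Classical in
/-- The penalty term `d(x_{t₁}, K^c) ∧ (t - t₁)_+ 𝟙_{t₁ < ξ(x)}` appearing in the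
definition of the pseudo-metrics (with the convention `d(a, ∅) = +∞`). -/
noncomputable def pen (ρ : S → S → ℝ) (t : ℝ) (K : Set S) (x : Path S) (t₁ : ℝ) : ℝ :=
  Option.elim (show Option S from x t₁) 0 (fun a =>
    if (Kᶜ : Set S).Nonempty then min (sInf ((fun b => ρ a b) '' (Kᶜ : Set S))) (max (t - t₁) 0)
    else max (t - t₁) 0)

open Classical in
/-- The set of admissible bounds in the definition of `ρ̃_{t,K}` (`useLip = false`) and of
`ρ_{t,K}` (`useLip = true`). -/
def rhoSet (useLip : Bool) (ρ : S → S → ℝ) (t : ℝ) (K : Set S) (x y : Path S) : Set ℝ :=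
  {r : ℝ | 0 ≤ r ∧ ∃ t₁ t₂ : ℝ, ∃ l : ℝ → ℝ, 0 ≤ t₁ ∧ 0 ≤ t₂ ∧ l t₁ = t₂ ∧
    (if useLip then IsLipTimeBij l else IsTimeBij l) ∧
    (∀ s : ℝ, 0 ≤ s → s < t₁ → x s ≠ OnePoint.infty) ∧
    (∀ s : ℝ, 0 ≤ s → s < t₂ → y s ≠ OnePoint.infty) ∧
    (∀ s : ℝ, 0 ≤ s → s < t₁ → dd ρ (x s) (y (l s)) ≤ r) ∧
    IdDistLe l t₁ r ∧
    (useLip = true → LogSlopeLe l t₁ r) ∧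
    pen ρ t K x t₁ ≤ r ∧ pen ρ t K y t₂ ≤ r}

/-- The pseudo-metric `ρ̃_{t,K}`. -/
noncomputable def rhoTilde (ρ : S → S → ℝ) (t : ℝ) (K : Set S) (x y : Path S) : ℝ :=
  sInf (rhoSet false ρ t K x y)

/-- The pseudo-metric `ρ_{t,K}`. -/
noncomputable def rhoMet (ρ : S → S → ℝ) (t : ℝ) (K : Set S) (x y : Path S) : ℝ :=
  sInf (rhoSet true ρ t K x y)

/-! ### Time change -/

/-- `g ∈ C^{≠0}(S, ℝ₊)`: `{g = 0}` is closed and `g` is continuous on `{g ≠ 0}`. -/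
def Czero (g : S → ℝ) : Prop :=
  (∀ a : S, 0 ≤ g a) ∧ IsClosed {a : S | g a = 0} ∧ ContinuousOn g {a : S | g a ≠ 0}

/-- `g ∈ C̃^{≠0}(S, ℝ₊)`: moreover `g` is bounded on every compact subset of `S`. -/
def CzeroLocBdd (g : S → ℝ) : Prop :=
  Czero g ∧ ∀ K : Set S, IsCompact K → ∃ C : ℝ, ∀ a ∈ K, g a ≤ C

/-- `g` extended to `S^Δ` by the junk value `0` at `Δ`. -/
def gOP (g : S → ℝ) : OnePoint S → ℝ := fun a => Option.elim (show Option S from a) 0 g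

open Classical in
/-- The additive functional `A^g_t(x) = ∫_0^t du / g(x_u)` for `t ∈ [0, τ^{{g≠0}}(x)]`,
and `+∞` otherwise. -/
noncomputable def Ag (g : S → ℝ) (x : Path S) (t : ℝ) : ℝ≥0∞ :=
  if 0 ≤ t ∧ ENNReal.ofReal t ≤ tauU {a : S | g a ≠ 0} x then
    ∫⁻ u in Ioo (0:ℝ) t, (ENNReal.ofReal (gOP g (x u)))⁻¹
  else ⊤

/-- The time change `τ^g_t(x) = inf {s ≥ 0 | A^g_s(x) ≥ t}`, for `t ∈ [0,∞]`. -/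
noncomputable def taug (g : S → ℝ) (x : Path S) (t : ℝ≥0∞) : ℝ≥0∞ :=
  ⨅ s ∈ {s : ℝ | 0 ≤ s ∧ t ≤ Ag g x s}, ENNReal.ofReal s

/-- The total mass `A^g_{τ^g_∞(x)}(x) = ∫_0^{τ^{{g≠0}}(x)} du / g(x_u)`. -/
noncomputable def Atotal (g : S → ℝ) (x : Path S) : ℝ≥0∞ :=
  ∫⁻ u in {u : ℝ | 0 < u ∧ ENNReal.ofReal u ≤ tauU {a : S | g a ≠ 0} x},
    (ENNReal.ofReal (gOP g (x u)))⁻¹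

/-- The filter of times converging to `t ∈ [0,∞]` from the left. -/
noncomputable def leftFilter (t : ℝ≥0∞) : Filter ℝ := if t = ⊤ then atTop else 𝓝[<] t.toReal

open Classical in
/-- The left limit `x_{t-}` at a `[0,∞]`-valued time, junk value `Δ` if it does not exist. -/
noncomputable def leftLimValE (x : Path S) (t : ℝ≥0∞) : OnePoint S :=
  if h : ∃ a : OnePoint S, Tendsto x (leftFilter t) (𝓝 a) then h.choose else OnePoint.infty

open Classical in
/-- The time-changed path `g·x` of Definition 3.1.  -/
noncomputable def timeChange (g : S → ℝ) (x : Path S) : Path S := fun t =>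
  if 0 ≤ t ∧ Atotal g x ≤ ENNReal.ofReal t ∧
      ∃ a : S, g a = 0 ∧ Tendsto x (leftFilter (tauU {b : S | g b ≠ 0} x)) (𝓝 (a : OnePoint S))
  then leftLimValE x (tauU {b : S | g b ≠ 0} x)
  else evalE x (taug g x (ENNReal.ofReal t))

/-- The constant path equal to `Δ`. -/
def deadPath (S : Type*) [TopologicalSpace S] : Path S := fun _ => OnePoint.infty

lemma isDexp_deadPath : IsDexp (deadPath S) := by
  refine ⟨fun _ _ => rfl, fun _ _ _ _ => rfl, ?_, ?_, ?_⟩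
  · have : xiSet (deadPath S) = univ := by ext t; simp [xiSet, deadPath]
    rw [this]; exact isClosed_univ
  · intro t _ h; exact absurd rfl h
  · intro t _ h; exact absurd rfl h

lemma isDloc_deadPath : IsDloc (deadPath S) := by
  refine ⟨isDexp_deadPath, ?_⟩
  rintro ⟨-, hxi, -⟩
  exfalso
  have huniv : xiSet (deadPath S) = univ := by ext t; simp [xiSet, deadPath]
  have : xiR (deadPath S) = 0 := by
    rw [xiR, huniv]
    exact Real.sInf_of_not_bddBelow (by simp [not_bddBelow_univ (α := ℝ)])
  rw [this] at hxi; exact lt_irrefl 0 hxi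

lemma isCadlagDelta_deadPath : IsCadlagDelta (deadPath S) :=
  ⟨fun _ _ => rfl, fun _ _ => tendsto_const_nhds, fun _ _ => ⟨OnePoint.infty, tendsto_const_nhds⟩⟩

open Classical in
/-- Packaging of a raw path as an element of `𝔻_loc(S)` (junk value if it is not one). -/
noncomputable def toDloc (y : Path S) : DlocT S :=
  if h : IsDloc y then ⟨y, h⟩ else ⟨deadPath S, isDloc_deadPath⟩

open Classical in
/-- Packaging of a raw path as an element of `𝔻(S^Δ)` (junk value if it is not one). -/
noncomputable def toDDelta (y : Path S) : DDeltaT S :=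
  if h : IsCadlagDelta y then ⟨y, h⟩ else ⟨deadPath S, isCadlagDelta_deadPath⟩

/-- Condition defining the continuity set `B` of Theorem 3.3, for a pair `(g, x)`. -/
def BCond (g : S → ℝ) (x : Path S) : Prop :=
  (tauU {a : S | g a ≠ 0} x < xiE x →
    ∀ t : ℝ, tauU {a : S | g a ≠ 0} x < ENNReal.ofReal t →
      ∫⁻ u in Ioo (0:ℝ) t, (ENNReal.ofReal (gOP g (x u)))⁻¹ = ⊤) ∧
  (Atotal g x < ⊤ →
    ∀ a : S, tauU {a : S | g a ≠ 0} x ≠ ⊤ →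
      Tendsto x (𝓝[<] (tauU {a : S | g a ≠ 0} x).toReal) (𝓝 (a : OnePoint S)) →
      g a = 0 → x ((tauU {a : S | g a ≠ 0} x).toReal) = (a : OnePoint S))

/-- `x_{ξ(x)-}` exists in `U` whenever `0 < ξ(x) < ∞`. -/
def limExistsIn (U : Set S) (y : Path S) : Prop :=
  (explodes y ∧ 0 < xiR y) → ∃ a ∈ U, Tendsto y (𝓝[<] xiR y) (𝓝 (a : OnePoint S))

/-! ### Global Skorokhod convergence -/

/-- Convergence in the global Skorokhod topology of `𝔻(S)` (Corollary 2.7). -/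
def ConvGlob (ρ : S → S → ℝ) (xk : ℕ → Path S) (x : Path S) : Prop :=
  ∃ l : ℕ → ℝ → ℝ, (∀ k, IsLipTimeBij (l k)) ∧ ∀ t : ℝ, 0 ≤ t →
    (∀ ε > (0:ℝ), ∀ᶠ k in atTop, ∀ s : ℝ, 0 ≤ s → s ≤ t → dd ρ (x s) (xk k (l k s)) ≤ ε) ∧
    (∀ ε > (0:ℝ), ∀ᶠ k in atTop, LogSlopeLe (l k) t ε)

/-- Convergence in the global Skorokhod topology of `𝔻(S^Δ)`, written with entourages of the
(unique) uniformity of the compact space `S^Δ` (equivalently, with any compatible metric). -/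
def ConvGlobDelta (xk : ℕ → Path S) (x : Path S) : Prop :=
  ∃ l : ℕ → ℝ → ℝ, (∀ k, IsTimeBij (l k)) ∧ ∀ t : ℝ, 0 ≤ t →
    (∀ V ∈ 𝓝ˢ (Set.diagonal (OnePoint S)), ∀ᶠ k in atTop,
      ∀ s : ℝ, 0 ≤ s → s ≤ t → ((x s, xk k (l k s)) : OnePoint S × OnePoint S) ∈ V) ∧
    (∀ ε > (0:ℝ), ∀ᶠ k in atTop, IdDistLe (l k) t ε)

/-! ### Markov families -/

/-- The shifted path `(X_{t₀+t})_{t≥0}`, at a `[0,∞]`-valued time `t₀`. -/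
noncomputable def shiftE (x : Path S) (t₀ : ℝ≥0∞) : Path S := fun t =>
  if t₀ = ⊤ then OnePoint.infty else x (t₀.toReal + max t 0)

/-- Conditions a), b) in the definition of a Markov family (together with the
normalisation `P_Δ(ξ = 0) = 1`). -/
def MarkovBase {α : Type*} (ev : α → Path S)
    (P : OnePoint S → @Measure α (filtAll ev)) : Prop :=
  (∀ a : OnePoint S, @IsProbabilityMeasure α (filtAll ev) (P a)) ∧
  (∀ B : Set α, MeasurableSet[filtAll ev] B →
    @Measurable S ℝ≥0∞ (borel S) inferInstance (fun a : S => P (a : OnePoint S) B)) ∧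
  (∀ a : S, P (a : OnePoint S) {x | ev x 0 = (a : OnePoint S)} = 1) ∧
  (P OnePoint.infty {x | ev x 0 = OnePoint.infty} = 1)

/-- Condition c) in the definition of a `(𝓖_t)`-Markov family. -/
def MarkovProp {α : Type*} (ev : α → Path S) (G : ℝ → MeasurableSpace α)
    (P : OnePoint S → @Measure α (filtAll ev)) : Prop :=
  ∀ (a : OnePoint S) (t₀ : ℝ), 0 ≤ t₀ →
    ∀ B : Set (Path S), MeasurableSet[filtAll (id : Path S → Path S)] B →
      ∀ A : Set α, MeasurableSet[G t₀] A →
        P a (A ∩ {x | (fun t => ev x (t₀ + max t 0)) ∈ B}) =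
          ∫⁻ x in A, P (ev x t₀) {y | ev y ∈ B} ∂(P a)

/-- Condition c) for a `(𝓖_t)`-strong Markov family: the Markov property at every
`(𝓖_t)`-stopping time. -/
def StrongMarkovProp {α : Type*} (ev : α → Path S) (G : ℝ → MeasurableSpace α)
    (P : OnePoint S → @Measure α (filtAll ev)) : Prop :=
  ∀ (a : OnePoint S) (τ : α → ℝ≥0∞),
    (∀ t : ℝ, 0 ≤ t → MeasurableSet[G t] {x | τ x ≤ ENNReal.ofReal t}) →
    ∀ B : Set (Path S), MeasurableSet[filtAll (id : Path S → Path S)] B →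
      ∀ A : Set α, MeasurableSet[filtAll ev] A →
        (∀ t : ℝ, 0 ≤ t → MeasurableSet[G t] (A ∩ {x | τ x ≤ ENNReal.ofReal t})) →
        P a (A ∩ {x | shiftE (ev x) (τ x) ∈ B}) =
          ∫⁻ x in A, P (evalE (ev x) (τ x)) {y | ev y ∈ B} ∂(P a)

variable {S : Type*} [MetricSpace S] [SecondCountableTopology S] [LocallyCompactSpace S]

/-- `h` extended to `S^Δ × S^Δ` by the junk value `0`. -/
noncomputable def hOP (h : S × S → ℝ) : OnePoint S → OnePoint S → ℝ :=
  fun a b => Option.elim (show Option S from a) 0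
    (fun a' => Option.elim (show Option S from b) 0 (fun b' => h (a', b')))

/-- The family of pairs `{(X_{τ₀}, X_s)}_{τ₀ ≤ s ≤ t}`, as a subset of `S × S`. -/
def pairSet (τ₀ : DexpT S → ℝ≥0∞) (x : DexpT S) (t : ℝ) : Set (S × S) :=
  {p : S × S | evalE x.1 (τ₀ x) = (p.1 : OnePoint S) ∧
    ∃ s : ℝ, (τ₀ x).toReal ≤ s ∧ s ≤ t ∧ x.1 s = (p.2 : OnePoint S)}

/-- `{(X_{τ₀}, X_s)}_{τ₀ ≤ s ≤ t}` is compactly embedded in `𝒰`. -/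
def pairOK (𝒰 : Set (S × S)) (τ₀ : DexpT S → ℝ≥0∞) (x : DexpT S) (t : ℝ) : Prop :=
  evalE x.1 (τ₀ x) ≠ OnePoint.infty ∧
  (∀ s : ℝ, (τ₀ x).toReal ≤ s → s ≤ t → x.1 s ≠ OnePoint.infty) ∧
  IsCompact (closure (pairSet τ₀ x t)) ∧ closure (pairSet τ₀ x t) ⊆ 𝒰

/-- The integral `∫_{τ₀}^t h(X_{τ₀}, X_s) ds`. -/
noncomputable def hInt (h : S × S → ℝ) (τ₀ : DexpT S → ℝ≥0∞) (x : DexpT S) (t : ℝ) : ℝ≥0∞ :=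
  ∫⁻ s in Ioc ((τ₀ x).toReal) t, ENNReal.ofReal (hOP h (evalE x.1 (τ₀ x)) (x.1 s))

/-- The random time
`τ = inf {t ≥ τ₀ | {(X_{τ₀}, X_s)}_{τ₀ ≤ s ≤ t} ⋐̸ 𝒰 or ∫_{τ₀}^t h(X_{τ₀}, X_s) ds ≥ M}`. -/
noncomputable def tauHit (𝒰 : Set (S × S)) (h : S × S → ℝ) (τ₀ : DexpT S → ℝ≥0∞)
    (M : DexpT S → ℝ≥0∞) (x : DexpT S) : ℝ≥0∞ :=
  ⨅ t ∈ {t : ℝ | 0 ≤ t ∧ τ₀ x ≤ ENNReal.ofReal t ∧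
      (¬ pairOK 𝒰 τ₀ x t ∨ M x ≤ hInt h τ₀ x t)}, ENNReal.ofReal t

/-! ### Auxiliary material for Statement 1 -/

section Generic
variable {T : Type*} [TopologicalSpace T] [T2Space T] [SecondCountableTopology T]
  [LocallyCompactSpace T]

instance onePoint_secondCountable : SecondCountableTopology (OnePoint T) := by
  obtain ⟨B, hBc, hBb⟩ := TopologicalSpace.exists_countable_basis T
  set K := CompactExhaustion.choice T
  set C : Set (Set (OnePoint T)) :=
    ((fun s => (OnePoint.some '' s)) '' B) ∪ (range fun n => (OnePoint.some '' (K n : Set T))ᶜ)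
  have hCc : C.Countable := (hBc.image _).union (countable_range _)
  refine ⟨⟨C, hCc, ?_⟩⟩
  refine (TopologicalSpace.isTopologicalBasis_of_isOpen_of_nhds ?_ ?_).eq_generateFrom
  · rintro s (⟨b, hb, rfl⟩ | ⟨n, rfl⟩)
    · exact OnePoint.isOpen_image_coe.2 (hBb.2.isOpen hb)
    · exact OnePoint.isOpen_compl_image_coe.2 ⟨(K.isCompact n).isClosed, K.isCompact n⟩
  · rintro (⟨⟩|a) u hu huo
    · have hK : IsCompact ((OnePoint.some ⁻¹' u)ᶜ : Set T) :=
        ((OnePoint.isOpen_iff_of_mem (s := u) hu).1 huo).2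
      obtain ⟨n, hn⟩ := K.exists_superset_of_isCompact hK
      refine ⟨(OnePoint.some '' (K n : Set T))ᶜ, Or.inr ⟨n, rfl⟩, ?_, ?_⟩
      · exact fun ⟨y, _, h⟩ => OnePoint.coe_ne_infty y h
      · rintro (⟨⟩|y) hy
        · exact hu
        · have : y ∈ OnePoint.some ⁻¹' u := by
            by_contra h
            exact hy ⟨y, hn h, rfl⟩
          exact this
    · obtain ⟨b, hb, hab, hbu⟩ := hBb.2.exists_subset_of_mem_open
        (show a ∈ OnePoint.some ⁻¹' u from hu) (huo.preimage OnePoint.continuous_coe)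
      exact ⟨OnePoint.some '' b, Or.inl ⟨b, hb, rfl⟩, ⟨a, hab, rfl⟩,
        image_subset_iff.2 hbu⟩

/-- Exhaustion of an open set by open sets with compact closures inside it. -/
theorem exists_open_exhaustion {V : Set T} (hV : IsOpen V) :
    ∃ W : ℕ → Set T, (∀ m, IsOpen (W m)) ∧ (∀ m, IsCompact (closure (W m))) ∧
      (∀ m, closure (W m) ⊆ V) ∧
      ∀ L : Set T, IsCompact L → L ⊆ V → ∃ m, L ⊆ W m := by
  haveI := hV.locallyCompactSpace
  haveI : SigmaCompactSpace V := inferInstance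
  set K := CompactExhaustion.choice V
  refine ⟨fun m => Subtype.val '' interior (K (m + 1)), fun m =>
    (hV.isOpenEmbedding_subtypeVal).isOpenMap _ isOpen_interior, fun m => ?_, fun m => ?_, ?_⟩
  · refine IsCompact.of_isClosed_subset ((K.isCompact (m+1)).image continuous_subtype_val)
      isClosed_closure ?_
    exact closure_minimal (image_mono interior_subset)
      (((K.isCompact (m+1)).image continuous_subtype_val).isClosed)
  · refine (closure_minimal (image_mono interior_subset)
      (((K.isCompact (m+1)).image continuous_subtype_val).isClosed)).trans ?_
    exact fun a ⟨b, _, hb⟩ => hb ▸ b.2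
  · intro L hL hLV
    have hL' : IsCompact ((Subtype.val : V → T) ⁻¹' L) := by
      rw [Topology.IsEmbedding.subtypeVal.isCompact_iff]
      have : Subtype.val '' ((Subtype.val : V → T) ⁻¹' L) = L := by
        rw [Subtype.image_preimage_coe]
        exact inter_eq_self_of_subset_right hLV
      rwa [this]
    obtain ⟨m, hm⟩ := K.exists_superset_of_isCompact hL'
    refine ⟨m, fun a ha => ?_⟩
    exact ⟨⟨a, hLV ha⟩, K.subset_interior_succ m (hm ha), rfl⟩

end Generic

theorem filt_mono' {α : Type*} (ev : α → Path S) {s t : ℝ} (h : s ≤ t) :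
    filt ev s ≤ filt ev t :=
  iSup₂_le fun r hr => le_iSup₂ (f := fun (s : ℝ) (_ : s ∈ Icc (0:ℝ) t) =>
    MeasurableSpace.comap (fun x => ev x s) (msOP S)) r ⟨hr.1, hr.2.trans h⟩

theorem measurable_eval {α : Type*} (ev : α → Path S) {t s : ℝ} (hs : s ∈ Icc 0 t) :
    @Measurable α (OnePoint S) (filt ev t) (msOP S) (fun x => ev x s) := by
  rw [@measurable_iff_comap_le]
  exact le_iSup₂ (f := fun (s : ℝ) (_ : s ∈ Icc (0:ℝ) t) =>
    MeasurableSpace.comap (fun x => ev x s) (msOP S)) s hs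

theorem xiE_le_iff (x : DexpT S) {t : ℝ} (ht : 0 ≤ t) :
    xiE x.1 ≤ ENNReal.ofReal t ↔ x.1 t = OnePoint.infty := by
  constructor
  · intro hle
    by_contra hne
    have hgt : ∀ s ∈ xiSet x.1, t < s := by
      intro s hs
      by_contra hst
      exact hne (x.2.2.1 (not_lt.1 hst) hs)
    rcases eq_empty_or_nonempty (xiSet x.1) with he | hne'
    · rw [xiE, he] at hle; simp at hle
    · have hbdd : BddBelow (xiSet x.1) := ⟨t, fun s hs => (hgt s hs).le⟩
      have hmem : sInf (xiSet x.1) ∈ xiSet x.1 := x.2.2.2.1.csInf_mem hne' hbdd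
      have h1 : t < sInf (xiSet x.1) := hgt _ hmem
      have h2 : ENNReal.ofReal (sInf (xiSet x.1)) ≤ xiE x.1 :=
        le_iInf₂ fun s hs => ENNReal.ofReal_le_ofReal (csInf_le hbdd hs)
      have := h2.trans hle
      rw [ENNReal.ofReal_le_ofReal_iff ht] at this
      exact absurd this (not_le.2 h1)
  · intro hx
    exact iInf₂_le_of_le t hx le_rfl

/-- The countable set of sampling times. -/
def Dset (t : ℝ) : Set ℝ := insert t (Icc 0 t ∩ range (fun q : ℚ => (q : ℝ)))

theorem Dset_countable (t : ℝ) : (Dset t).Countable :=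
  (Countable.mono inter_subset_right (countable_range _)).insert t

theorem Dset_subset (t : ℝ) (ht : 0 ≤ t) : Dset t ⊆ Icc 0 t := by
  rintro r (rfl | ⟨hr, -⟩)
  · exact ⟨ht, le_rfl⟩
  · exact hr

/-- Right-approximation by rational sampling times. -/
theorem mem_of_rat_right (x : DexpT S) {r t : ℝ} (hr : 0 ≤ r) (hrt : r < t)
    (hx : x.1 r ≠ OnePoint.infty) {A : Set (OnePoint S)} (hA : IsClosed A)
    (hq : ∀ q ∈ Dset t, r < q → x.1 q ∈ A) : x.1 r ∈ A := by
  set s : Set ℝ := Ioo r t ∩ range (fun q : ℚ => (q : ℝ)) with hs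
  have hne : (𝓝[s] r).NeBot := by
    rw [mem_closure_iff_nhdsWithin_neBot.symm]
    rw [mem_closure_iff]
    intro o ho hro
    obtain ⟨ε, hε, hball⟩ := Metric.isOpen_iff.1 ho r hro
    obtain ⟨q, hq1, hq2⟩ := exists_rat_btwn (show r < min t (r + ε) by
      simp [hrt, hε])
    refine ⟨q, hball ?_, ⟨hq1, (hq2.trans_le (min_le_left _ _))⟩, ⟨q, rfl⟩⟩
    rw [Metric.mem_ball, Real.dist_eq, abs_lt]
    constructor <;> nlinarith [hq2.trans_le (min_le_right _ _)]
  have htend : Tendsto x.1 (𝓝[s] r) (𝓝 (x.1 r)) :=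
    (x.2.2.2.2.1 r hr hx).mono_left (nhdsWithin_mono _ (fun u hu => hu.1.1))
  refine hA.mem_of_tendsto htend ?_
  filter_upwards [self_mem_nhdsWithin] with u hu
  exact hq u (Or.inr ⟨⟨hr.trans hu.1.1.le, hu.1.2.le⟩, hu.2⟩) hu.1.1

/-- Left-approximation by rational sampling times. -/
theorem mem_of_rat_left (x : Path S) {s t : ℝ} (hs : 0 < s) (hst : s ≤ t)
    {b : OnePoint S} (hlim : Tendsto x (𝓝[<] s) (𝓝 b))
    {A : Set (OnePoint S)} (hA : IsClosed A)
    (hq : ∀ q ∈ Dset t, q < s → x q ∈ A) : b ∈ A := by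
  set s' : Set ℝ := Ioo (max 0 (s - 1)) s ∩ range (fun q : ℚ => (q : ℝ)) with hs'
  have hne : (𝓝[s'] s).NeBot := by
    rw [mem_closure_iff_nhdsWithin_neBot.symm]
    rw [mem_closure_iff]
    intro o ho hro
    obtain ⟨ε, hε, hball⟩ := Metric.isOpen_iff.1 ho s hro
    obtain ⟨q, hq1, hq2⟩ := exists_rat_btwn (show max (max 0 (s-1)) (s - ε) < s by
      simp [hs, hε])
    rw [max_lt_iff] at hq1
    refine ⟨q, hball ?_, ⟨hq1.1, hq2⟩, ⟨q, rfl⟩⟩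
    rw [Metric.mem_ball, Real.dist_eq, abs_lt]
    constructor <;> nlinarith [hq1.2]
  have htend : Tendsto x (𝓝[s'] s) (𝓝 b) :=
    hlim.mono_left (nhdsWithin_mono _ (fun u hu => hu.1.2))
  refine hA.mem_of_tendsto htend ?_
  filter_upwards [self_mem_nhdsWithin] with u hu
  refine hq u (Or.inr ⟨⟨le_of_lt (lt_of_le_of_lt (le_max_left _ _) hu.1.1), hu.1.2.le.trans hst⟩,
    hu.2⟩) hu.1.2


theorem measurableSet_msOP {A : Set (OnePoint S)} (hA : IsOpen A) : MeasurableSet[msOP S] A :=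
  MeasurableSpace.measurableSet_generateFrom hA

/-- The set of exit times defining `tauU`. -/
def exitSet (U : Set S) (x : Path S) : Set ℝ :=
  {t : ℝ | 0 ≤ t ∧
      ((0 < t ∧ ¬ ∃ a ∈ U, Tendsto x (𝓝[<] t) (𝓝 (a : OnePoint S))) ∨
        ¬ ∃ a ∈ U, x t = (a : OnePoint S))}

theorem tauU_eq (U : Set S) (x : Path S) :
    tauU U x = ⨅ t ∈ exitSet U x, ENNReal.ofReal t := rfl

theorem tauU_le_xiE' (U : Set S) (x : DexpT S) : tauU U x.1 ≤ xiE x.1 := by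
  refine le_iInf₂ fun s hs => ?_
  have hxs : x.1 s = OnePoint.infty := hs
  rcases le_or_gt 0 s with h0 | h0
  · exact iInf₂_le_of_le s ⟨h0, Or.inr (by rintro ⟨a, -, ha⟩; exact OnePoint.coe_ne_infty a (ha.symm.trans hxs))⟩ le_rfl
  · have hx0 : x.1 0 = OnePoint.infty := (x.2.1 s h0.le) ▸ hxs
    have : tauU U x.1 ≤ ENNReal.ofReal 0 :=
      iInf₂_le_of_le 0 ⟨le_rfl, Or.inr (by rintro ⟨a, -, ha⟩; exact OnePoint.coe_ne_infty a (ha.symm.trans hx0))⟩ le_rfl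
    rw [ENNReal.ofReal_of_nonpos h0.le]
    simpa using this

theorem tauU_le_iff {U : Set S} (hU : IsOpen U) (x : DexpT S) {t : ℝ} (ht : 0 ≤ t) :
    tauU U x.1 ≤ ENNReal.ofReal t ↔ ∃ s ∈ Icc 0 t, s ∈ exitSet U x.1 := by
  constructor
  · intro hle
    by_contra hno
    push_neg at hno
    -- the value at `t` and nearby behaviour
    have hnt := hno t ⟨ht, le_rfl⟩
    have hxt : ∃ a ∈ U, x.1 t = (a : OnePoint S) := by
      by_contra hc
      exact hnt ⟨ht, Or.inr hc⟩
    obtain ⟨a, haU, hxa⟩ := hxt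
    obtain ⟨N, hNc, haN, hNU⟩ := exists_compact_subset hU haU
    have hxne : x.1 t ≠ OnePoint.infty := by rw [hxa]; exact OnePoint.coe_ne_infty a
    have hrc : Tendsto x.1 (𝓝[>] t) (𝓝 ((a : OnePoint S))) := hxa ▸ x.2.2.2.2.1 t ht hxne
    have hmemN : (OnePoint.some '' interior N) ∈ 𝓝 ((a : OnePoint S)) :=
      (OnePoint.isOpenMap_coe _ isOpen_interior).mem_nhds ⟨a, haN, rfl⟩
    obtain ⟨δ, hδt, hδ⟩ := (nhdsGT_basis t).mem_iff.1 (hrc hmemN)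
    -- no exit time below `δ`
    have hclaim : ∀ s ∈ exitSet U x.1, δ ≤ s := by
      intro s hs
      by_contra hsδ
      push_neg at hsδ
      rcases le_or_gt s t with hst | hts
      · exact hno s ⟨hs.1, hst⟩ hs
      · have hmem : x.1 s ∈ OnePoint.some '' interior N := hδ ⟨hts, hsδ⟩
        obtain ⟨b, hbN, hbx⟩ := hmem
        rcases hs.2 with ⟨hspos, hnolim⟩ | hnoval
        · have hxsne : x.1 s ≠ OnePoint.infty := by
            rw [← hbx]; exact OnePoint.coe_ne_infty b
          obtain ⟨c, hc⟩ := x.2.2.2.2.2 s hspos hxsne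
          refine hnolim ⟨c, ?_, hc⟩
          have hNcl : IsClosed (OnePoint.some '' N) :=
            (hNc.image OnePoint.continuous_coe).isClosed
          have hev : ∀ᶠ u in 𝓝[<] s, x.1 u ∈ OnePoint.some '' N := by
            filter_upwards [Ioo_mem_nhdsLT_of_mem (show s ∈ Ioc t s from ⟨hts, le_rfl⟩)]
              with u hu
            obtain ⟨d, hd, hdx⟩ := hδ ⟨hu.1, hu.2.trans hsδ⟩
            exact ⟨d, interior_subset hd, hdx⟩
          have : (c : OnePoint S) ∈ OnePoint.some '' N := hNcl.mem_of_tendsto hc hev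
          obtain ⟨c', hc', hcc⟩ := this
          exact (OnePoint.coe_injective hcc) ▸ hNU hc'
        · exact hnoval ⟨b, hNU (interior_subset hbN), hbx.symm⟩
    have h1 : ENNReal.ofReal δ ≤ tauU U x.1 :=
      le_iInf₂ fun s hs => ENNReal.ofReal_le_ofReal (hclaim s hs)
    have h2 : ENNReal.ofReal t < ENNReal.ofReal δ :=
      (ENNReal.ofReal_lt_ofReal_iff (ht.trans_lt hδt)).2 hδt
    exact absurd ((h1.trans hle).trans_lt h2) (lt_irrefl _)
  · rintro ⟨s, ⟨hs0, hst⟩, hmem⟩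
    exact iInf₂_le_of_le s hmem (ENNReal.ofReal_le_ofReal hst)

theorem noExit_iff {U : Set S} (hU : IsOpen U) {V : ℕ → Set S}
    (hVo : ∀ m, IsOpen (V m)) (hVc : ∀ m, IsCompact (closure (V m)))
    (hVU : ∀ m, closure (V m) ⊆ U)
    (hVcov : ∀ L : Set S, IsCompact L → L ⊆ U → ∃ m, L ⊆ V m)
    (x : DexpT S) {t : ℝ} (ht : 0 ≤ t) :
    (∀ s ∈ Icc 0 t, s ∉ exitSet U x.1) ↔
      ∃ m, ∀ r ∈ Dset t, x.1 r ∈ OnePoint.some '' (V m) := by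
  constructor
  · intro hno
    -- the closure of the range is a compact subset of `U`
    have hval : ∀ s ∈ Icc (0:ℝ) t, ∃ a ∈ U, x.1 s = (a : OnePoint S) := by
      intro s hs
      by_contra hc
      exact hno s hs ⟨hs.1, Or.inr hc⟩
    have hlim : ∀ s ∈ Ioc (0:ℝ) t, ∃ a ∈ U, Tendsto x.1 (𝓝[<] s) (𝓝 ((a : OnePoint S))) := by
      intro s hs
      by_contra hc
      exact hno s ⟨hs.1.le, hs.2⟩ ⟨hs.1.le, Or.inl ⟨hs.1, hc⟩⟩
    set Limg : Set (OnePoint S) := closure (x.1 '' Icc 0 t) with hLimg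
    have hLimgc : IsCompact Limg := isClosed_closure.isCompact
    have claim1 : ∀ b ∈ Limg, ∃ a ∈ U, b = (a : OnePoint S) := by
      intro b hb
      obtain ⟨u, hu, hub⟩ := mem_closure_iff_seq_limit.1 hb
      choose sn hsn hsnx using hu
      obtain ⟨s', hs', φ, hφ, hconv⟩ := isCompact_Icc.tendsto_subseq hsn
      have hxconv : Tendsto (fun n => x.1 (sn (φ n))) atTop (𝓝 b) := by
        have : (fun n => x.1 (sn (φ n))) = u ∘ φ := by
          funext n; rw [Function.comp_apply, hsnx]
        rw [this]
        exact hub.comp hφ.tendsto_atTop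
      have htri : (∃ᶠ n in atTop, sn (φ n) = s') ∨ (∃ᶠ n in atTop, sn (φ n) < s') ∨
          (∃ᶠ n in atTop, s' < sn (φ n)) := by
        by_contra hcon
        simp only [not_or] at hcon
        obtain ⟨h1, h2, h3⟩ := hcon
        rw [not_frequently] at h1 h2 h3
        have := ((h1.and h2).and h3).exists
        obtain ⟨n, ⟨hn1, hn2⟩, hn3⟩ := this
        rcases lt_trichotomy (sn (φ n)) s' with h|h|h
        exacts [hn2 h, hn1 h, hn3 h]
      rcases htri with hf | hf | hf
      · obtain ⟨ψ, hψ, hψeq⟩ := Filter.extraction_of_frequently_atTop hf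
        have : Tendsto (fun n => x.1 (sn (φ (ψ n)))) atTop (𝓝 b) := hxconv.comp hψ.tendsto_atTop
        have heq : (fun n => x.1 (sn (φ (ψ n)))) = fun _ => x.1 s' := by
          funext n; rw [hψeq n]
        rw [heq] at this
        have hbs : b = x.1 s' := tendsto_nhds_unique this tendsto_const_nhds
        obtain ⟨a, haU, hax⟩ := hval s' hs'
        exact ⟨a, haU, hbs.trans hax⟩
      · obtain ⟨ψ, hψ, hψlt⟩ := Filter.extraction_of_frequently_atTop hf
        have hconv' : Tendsto (fun n => sn (φ (ψ n))) atTop (𝓝[<] s') := by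
          exact tendsto_nhdsWithin_of_tendsto_nhds_of_eventually_within (fun n => sn (φ (ψ n)))
            (hconv.comp hψ.tendsto_atTop) (Eventually.of_forall fun n => hψlt n)
        have hs'pos : 0 < s' := lt_of_le_of_lt (hsn (φ (ψ 0))).1 (hψlt 0)
        obtain ⟨a, haU, halim⟩ := hlim s' ⟨hs'pos, hs'.2⟩
        have : Tendsto (fun n => x.1 (sn (φ (ψ n)))) atTop (𝓝 ((a : OnePoint S))) :=
          halim.comp hconv'
        exact ⟨a, haU, tendsto_nhds_unique (hxconv.comp hψ.tendsto_atTop) this⟩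
      · obtain ⟨ψ, hψ, hψgt⟩ := Filter.extraction_of_frequently_atTop hf
        have hconv' : Tendsto (fun n => sn (φ (ψ n))) atTop (𝓝[>] s') := by
          exact tendsto_nhdsWithin_of_tendsto_nhds_of_eventually_within (fun n => sn (φ (ψ n)))
            (hconv.comp hψ.tendsto_atTop) (Eventually.of_forall fun n => hψgt n)
        obtain ⟨a, haU, hax⟩ := hval s' hs'
        have hxne : x.1 s' ≠ OnePoint.infty := by rw [hax]; exact OnePoint.coe_ne_infty a
        have hrc : Tendsto x.1 (𝓝[>] s') (𝓝 (x.1 s')) := x.2.2.2.2.1 s' hs'.1 hxne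
        have : Tendsto (fun n => x.1 (sn (φ (ψ n)))) atTop (𝓝 (x.1 s')) := hrc.comp hconv'
        exact ⟨a, haU, (tendsto_nhds_unique (hxconv.comp hψ.tendsto_atTop) this).trans hax⟩
    set LS : Set S := OnePoint.some ⁻¹' Limg with hLS
    have himg : OnePoint.some '' LS = Limg := by
      apply Subset.antisymm (image_preimage_subset _ _)
      intro b hb
      obtain ⟨a, -, rfl⟩ := claim1 b hb
      exact ⟨a, hb, rfl⟩
    have hLSc : IsCompact LS := by
      rw [OnePoint.isOpenEmbedding_coe.isEmbedding.isCompact_iff, himg]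
      exact hLimgc
    have hLSU : LS ⊆ U := by
      intro a ha
      obtain ⟨a', ha', haa⟩ := claim1 _ ha
      exact (OnePoint.coe_injective haa.symm) ▸ ha'
    obtain ⟨m, hm⟩ := hVcov LS hLSc hLSU
    refine ⟨m, fun r hr => ?_⟩
    have hrIcc := Dset_subset t ht hr
    obtain ⟨a, -, hax⟩ := hval r hrIcc
    have : a ∈ LS := by
      rw [hLS, mem_preimage, ← hax]
      exact subset_closure ⟨r, hrIcc, rfl⟩
    exact ⟨a, hm this, hax.symm⟩
  · rintro ⟨m, hm⟩
    set K' : Set (OnePoint S) := OnePoint.some '' closure (V m) with hK'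
    have hK'cl : IsClosed K' := ((hVc m).image OnePoint.continuous_coe).isClosed
    have hmem : ∀ r ∈ Dset t, x.1 r ∈ K' := fun r hr =>
      image_mono subset_closure (hm r hr)
    have hxt : x.1 t ∈ K' := hmem t (Or.inl rfl)
    have hxtne : x.1 t ≠ OnePoint.infty := by
      rintro he
      rw [he] at hxt
      exact OnePoint.infty_notMem_image_coe hxt
    have hvalK : ∀ s ∈ Icc (0:ℝ) t, x.1 s ∈ K' := by
      intro s hs
      rcases eq_or_lt_of_le hs.2 with rfl | hst
      · exact hxt
      · have hxsne : x.1 s ≠ OnePoint.infty := fun he => hxtne (x.2.2.1 hs.2 he)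
        exact mem_of_rat_right x hs.1 hst hxsne hK'cl fun q hq hlt => hmem q hq
    intro s hs hexit
    rcases hexit.2 with ⟨hspos, hnolim⟩ | hnoval
    · have hxsne : x.1 s ≠ OnePoint.infty := by
        intro he
        have := hvalK s hs
        rw [he] at this
        exact OnePoint.infty_notMem_image_coe this
      obtain ⟨c, hc⟩ := x.2.2.2.2.2 s hspos hxsne
      have hcm : (c : OnePoint S) ∈ K' :=
        mem_of_rat_left x.1 hspos hs.2 hc hK'cl fun q hq hlt => hmem q hq
      obtain ⟨c', hc', hcc⟩ := hcm
      exact hnolim ⟨c, (hVU m) ((OnePoint.coe_injective hcc) ▸ hc'), hc⟩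
    · obtain ⟨a, ha, hax⟩ := hvalK s hs
      exact hnoval ⟨a, hVU m ha, hax.symm⟩

theorem tauU_isStopping {U : Set S} (hU : IsOpen U) :
    IsStopping (Subtype.val : DexpT S → Path S) (fun x => tauU U x.1) := by
  intro t ht
  show MeasurableSet[filt (Subtype.val : DexpT S → Path S) t]
    {x : DexpT S | tauU U x.1 ≤ ENNReal.ofReal t}
  obtain ⟨V, hVo, hVc, hVU, hVcov⟩ := exists_open_exhaustion hU
  have hset : {x : DexpT S | tauU U x.1 ≤ ENNReal.ofReal t} =
      (⋃ m, ⋂ r ∈ Dset t, (fun x : DexpT S => x.1 r) ⁻¹' (OnePoint.some '' (V m)))ᶜ := by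
    ext x
    rw [mem_setOf_eq, tauU_le_iff hU x ht, mem_compl_iff]
    rw [show (∃ s ∈ Icc 0 t, s ∈ exitSet U x.1) ↔ ¬ (∀ s ∈ Icc (0:ℝ) t, s ∉ exitSet U x.1) by
      push_neg; rfl]
    rw [noExit_iff hU hVo hVc hVU hVcov x ht]
    simp only [mem_iUnion, mem_iInter, mem_preimage]
  refine (congrArg (@MeasurableSet (DexpT S) (filt (Subtype.val : DexpT S → Path S) t)) hset).mpr ?_
  refine MeasurableSet.compl (MeasurableSet.iUnion fun m => ?_)
  refine MeasurableSet.biInter (Dset_countable t) fun r hr => ?_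
  exact measurable_eval (Subtype.val : DexpT S → Path S) (Dset_subset t ht hr)
    (measurableSet_msOP (OnePoint.isOpenMap_coe _ (hVo m)))

theorem xiE_isStopping :
    IsStopping (Subtype.val : DexpT S → Path S) (fun x : DexpT S => xiE x.1) := by
  intro t ht
  show MeasurableSet[filt (Subtype.val : DexpT S → Path S) t]
    {x : DexpT S | xiE x.1 ≤ ENNReal.ofReal t}
  have hset : {x : DexpT S | xiE x.1 ≤ ENNReal.ofReal t} =
      (fun x : DexpT S => x.1 t) ⁻¹' {OnePoint.infty} := by
    ext x; simpa using xiE_le_iff x ht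
  refine (congrArg (@MeasurableSet (DexpT S) (filt (Subtype.val : DexpT S → Path S) t)) hset).mpr ?_
  refine measurable_eval (Subtype.val : DexpT S → Path S) ⟨ht, le_rfl⟩ ?_
  have : IsClosed ({OnePoint.infty} : Set (OnePoint S)) := OnePoint.isClosed_infty
  have hopen : IsOpen ({OnePoint.infty}ᶜ : Set (OnePoint S)) := this.isOpen_compl
  simpa using (measurableSet_msOP hopen).compl


theorem stopping_event_le {τ₀ : DexpT S → ℝ≥0∞}
    (hτ₀ : IsStopping (Subtype.val : DexpT S → Path S) τ₀) {t r : ℝ} (ht : 0 ≤ t) (hr : r ≤ t) :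
    MeasurableSet[filt (Subtype.val : DexpT S → Path S) t]
      {x : DexpT S | τ₀ x ≤ ENNReal.ofReal r} := by
  rcases le_or_gt 0 r with h0 | h0
  · exact filt_mono' _ hr _ (hτ₀ r h0)
  · have : {x : DexpT S | τ₀ x ≤ ENNReal.ofReal r}
        = {x : DexpT S | τ₀ x ≤ ENNReal.ofReal 0} := by
      simp [ENNReal.ofReal_of_nonpos h0.le]
    refine (congrArg (@MeasurableSet (DexpT S) (filt (Subtype.val : DexpT S → Path S) t)) this).mpr ?_
    exact filt_mono' _ ht _ (hτ₀ 0 le_rfl)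

/-- The truncated value of the stopping time. -/
def tval (τ₀ : DexpT S → ℝ≥0∞) (t : ℝ) (x : DexpT S) : ℝ :=
  if τ₀ x ≤ ENNReal.ofReal t then (τ₀ x).toReal else t

theorem tval_nonneg {τ₀ : DexpT S → ℝ≥0∞} {t : ℝ} (ht : 0 ≤ t) (x : DexpT S) :
    0 ≤ tval τ₀ t x := by
  rw [tval]; split <;> simp [ht, ENNReal.toReal_nonneg]

theorem tval_le {τ₀ : DexpT S → ℝ≥0∞} {t : ℝ} (ht : 0 ≤ t) (x : DexpT S) :
    tval τ₀ t x ≤ t := by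
  rw [tval]; split
  · exact ENNReal.toReal_le_of_le_ofReal ht (by assumption)
  · exact le_rfl

theorem measurable_tval {τ₀ : DexpT S → ℝ≥0∞}
    (hτ₀ : IsStopping (Subtype.val : DexpT S → Path S) τ₀) {t : ℝ} (ht : 0 ≤ t) :
    @Measurable (DexpT S) ℝ (filt (Subtype.val : DexpT S → Path S) t) _ (tval τ₀ t) := by
  letI : MeasurableSpace (DexpT S) := filt (Subtype.val : DexpT S → Path S) t
  apply measurable_of_Iic
  intro r
  rcases lt_or_ge r 0 with hr | hr
  · have : tval τ₀ t ⁻¹' Iic r = ∅ := by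
      refine eq_empty_iff_forall_notMem.2 fun x hx => ?_
      exact absurd (le_trans (tval_nonneg ht x) hx) (not_le.2 hr)
    rw [this]; exact MeasurableSet.empty
  rcases le_or_gt t r with hrt | hrt
  · have : tval τ₀ t ⁻¹' Iic r = univ :=
      eq_univ_iff_forall.2 fun x => le_trans (tval_le ht x) hrt
    rw [this]; exact MeasurableSet.univ
  · have : tval τ₀ t ⁻¹' Iic r = {x : DexpT S | τ₀ x ≤ ENNReal.ofReal r} := by
      ext x
      simp only [mem_preimage, mem_Iic, mem_setOf_eq, tval]
      constructor
      · intro hx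
        split at hx
        · rename_i hcond
          have hne : τ₀ x ≠ ⊤ := ne_top_of_le_ne_top ENNReal.ofReal_ne_top hcond
          exact (ENNReal.le_ofReal_iff_toReal_le hne hr).2 hx
        · exact absurd hx (not_le.2 hrt)
      · intro hx
        have hcond : τ₀ x ≤ ENNReal.ofReal t := hx.trans (ENNReal.ofReal_le_ofReal hrt.le)
        rw [if_pos hcond]
        exact ENNReal.toReal_le_of_le_ofReal hr hx
    rw [this]
    exact stopping_event_le hτ₀ ht hrt.le

/-- dyadic upper approximation -/
def dyad (t : ℝ) (n : ℕ) (r : ℝ) : ℝ := min t ((⌈r * 2 ^ n⌉₊ : ℝ) / 2 ^ n)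

theorem dyad_monotone (t : ℝ) (n : ℕ) : Monotone (dyad t n) := by
  intro a b hab
  refine min_le_min le_rfl ?_
  have : (⌈a * 2 ^ n⌉₊ : ℝ) ≤ (⌈b * 2 ^ n⌉₊ : ℝ) := by
    exact_mod_cast Nat.ceil_le_ceil (by nlinarith [pow_pos (show (0:ℝ) < 2 by norm_num) n])
  exact div_le_div_of_nonneg_right this (by positivity) |>.trans_eq rfl

theorem dyad_mem {t : ℝ} (ht : 0 ≤ t) (n : ℕ) (r : ℝ) : dyad t n r ∈ Icc 0 t :=
  ⟨le_min ht (by positivity), min_le_left _ _⟩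

theorem dyad_ge {t : ℝ} (n : ℕ) {r : ℝ} (hr : 0 ≤ r) (hrt : r ≤ t) : r ≤ dyad t n r := by
  refine le_min hrt ?_
  rw [le_div_iff₀ (by positivity)]
  exact Nat.le_ceil _

theorem dyad_le {t : ℝ} (n : ℕ) {r : ℝ} (hr : 0 ≤ r) :
    dyad t n r ≤ r + (1/2 : ℝ) ^ n := by
  refine (min_le_right _ _).trans ?_
  rw [div_le_iff₀ (by positivity : (0:ℝ) < 2 ^ n)]
  have h1 : (⌈r * 2 ^ n⌉₊ : ℝ) < r * 2 ^ n + 1 := Nat.ceil_lt_add_one (by positivity)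
  have h2 : (r + (1/2:ℝ)^n) * 2 ^ n = r * 2 ^ n + 1 := by
    rw [add_mul, ← mul_pow]; norm_num
  rw [h2]
  exact h1.le

theorem tendsto_dyad {t : ℝ} {r : ℝ} (hr : 0 ≤ r) (hrt : r ≤ t) :
    Tendsto (fun n => dyad t n r) atTop (𝓝 r) := by
  have hup : Tendsto (fun n : ℕ => r + (1/2:ℝ)^n) atTop (𝓝 (r + 0)) :=
    tendsto_const_nhds.add (tendsto_pow_atTop_nhds_zero_of_lt_one (by norm_num) (by norm_num))
  rw [add_zero] at hup
  exact tendsto_of_tendsto_of_tendsto_of_le_of_le tendsto_const_nhds hup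
    (fun n => dyad_ge n hr hrt) (fun n => dyad_le n hr)

/-- Right-continuity along sequences decreasing to `r`. -/
theorem tendsto_eval_right (x : DexpT S) {r : ℝ} (hr : 0 ≤ r) {c : ℕ → ℝ}
    (hge : ∀ n, r ≤ c n) (hlim : Tendsto c atTop (𝓝 r)) :
    Tendsto (fun n => x.1 (c n)) atTop (𝓝 (x.1 r)) := by
  by_cases hx : x.1 r = OnePoint.infty
  · have : (fun n => x.1 (c n)) = fun _ => x.1 r := by
      funext n
      rw [hx, x.2.2.1 (hge n) hx]
    rw [this]
    exact tendsto_const_nhds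
  · have hIci : Tendsto x.1 (𝓝[≥] r) (𝓝 (x.1 r)) := by
      have : (Ici r) = insert r (Ioi r) := by
        rw [Set.Ioi_insert]
      rw [this, nhdsWithin_insert]
      rw [tendsto_sup]
      exact ⟨tendsto_pure_nhds x.1 r, x.2.2.2.2.1 r hr hx⟩
    exact hIci.comp (tendsto_nhdsWithin_of_tendsto_nhds_of_eventually_within c hlim
      (Eventually.of_forall fun n => hge n))

/-- Composition with a countably-valued time. -/
theorem measurable_eval_comp {t : ℝ} (ht : 0 ≤ t) (c : DexpT S → ℝ)
    (hrange : (range c).Countable) (hmem : ∀ x, c x ∈ Icc 0 t)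
    (hc : ∀ v : ℝ, MeasurableSet[filt (Subtype.val : DexpT S → Path S) t] {x | c x = v}) :
    @Measurable (DexpT S) (OnePoint S) (filt (Subtype.val : DexpT S → Path S) t) (msOP S)
      (fun x => x.1 (c x)) := by
  intro B hB
  have heq : (fun x : DexpT S => x.1 (c x)) ⁻¹' B
      = ⋃ v ∈ range c, ({x : DexpT S | c x = v} ∩ ((fun x : DexpT S => x.1 v) ⁻¹' B)) := by
    ext x
    simp only [mem_preimage, mem_iUnion, mem_inter_iff, mem_setOf_eq]
    constructor
    · intro hx
      exact ⟨c x, mem_range_self x, rfl, hx⟩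
    · rintro ⟨v, -, hcv, hxv⟩
      rw [hcv]; exact hxv
  rw [heq]
  refine MeasurableSet.biUnion hrange fun v hv => ?_
  obtain ⟨x₀, rfl⟩ := hv
  exact (hc _).inter (measurable_eval (Subtype.val : DexpT S → Path S) (hmem x₀) hB)

/-- The value `X_{τ₀}` (truncated at `t`). -/
def Yval (τ₀ : DexpT S → ℝ≥0∞) (t : ℝ) (x : DexpT S) : OnePoint S :=
  if τ₀ x ≤ ENNReal.ofReal t then evalE x.1 (τ₀ x) else OnePoint.infty

theorem measurable_Yval {τ₀ : DexpT S → ℝ≥0∞}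
    (hτ₀ : IsStopping (Subtype.val : DexpT S → Path S) τ₀) {t : ℝ} (ht : 0 ≤ t) :
    @Measurable (DexpT S) (OnePoint S) (filt (Subtype.val : DexpT S → Path S) t) (msOP S)
      (Yval τ₀ t) := by
  classical
  letI : MeasurableSpace (OnePoint S) := msOP S
  haveI : BorelSpace (OnePoint S) := ⟨rfl⟩
  letI : MeasurableSpace (DexpT S) := filt (Subtype.val : DexpT S → Path S) t
  set g : ℕ → DexpT S → OnePoint S := fun n x =>
    if τ₀ x ≤ ENNReal.ofReal t then x.1 (dyad t n (tval τ₀ t x)) else OnePoint.infty with hg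
  have hgm : ∀ n, Measurable (g n) := by
    intro n
    refine Measurable.ite (stopping_event_le hτ₀ ht le_rfl) ?_ measurable_const
    refine measurable_eval_comp ht _ ?_ (fun x => dyad_mem ht n _) ?_
    · have h1 : range (fun x => dyad t n (tval τ₀ t x)) ⊆ range (dyad t n) :=
        range_comp_subset_range (tval τ₀ t) (dyad t n)
      have h2 : range (dyad t n) ⊆ range (fun k : ℕ => min t ((k:ℝ)/2^n)) := by
        rintro r ⟨r', rfl⟩
        exact ⟨⌈r' * 2 ^ n⌉₊, rfl⟩
      exact ((countable_range _).mono h2).mono h1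
    · intro v
      exact measurable_tval hτ₀ ht ((dyad_monotone t n).measurable (measurableSet_singleton v))
  have hconv : ∀ x, Tendsto (fun n => g n x) atTop (𝓝 (Yval τ₀ t x)) := by
    intro x
    by_cases hcond : τ₀ x ≤ ENNReal.ofReal t
    · have hne : τ₀ x ≠ ⊤ := ne_top_of_le_ne_top ENNReal.ofReal_ne_top hcond
      have hYe : Yval τ₀ t x = x.1 ((τ₀ x).toReal) := by
        rw [Yval, if_pos hcond, evalE, if_neg hne]
      have hgeq : ∀ n, g n x = x.1 (dyad t n ((τ₀ x).toReal)) := by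
        intro n
        rw [hg]
        simp only [if_pos hcond, tval, if_pos hcond]
      have h0 : 0 ≤ (τ₀ x).toReal := ENNReal.toReal_nonneg
      have hle : (τ₀ x).toReal ≤ t := ENNReal.toReal_le_of_le_ofReal ht hcond
      rw [hYe]
      have := tendsto_eval_right x h0 (c := fun n => dyad t n ((τ₀ x).toReal))
        (fun n => dyad_ge n h0 hle) (tendsto_dyad h0 hle)
      simpa only [hgeq] using this
    · have : ∀ n, g n x = OnePoint.infty := fun n => by rw [hg]; simp [hcond]
      simp only [this, Yval, if_neg hcond]
      exact tendsto_const_nhds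
  exact measurable_of_tendsto_metrizable' atTop hgm (tendsto_pi_nhds.2 hconv)


/-- Clamping a real time to `[0, t]`. -/
def clamp (t s : ℝ) : ℝ := min (max s 0) t

/-- Joint measurability of the evaluation map. -/
theorem measurable_eval_prod {t : ℝ} (ht : 0 ≤ t) :
    @Measurable (DexpT S × ℝ) (OnePoint S)
      ((filt (Subtype.val : DexpT S → Path S) t).prod (borel ℝ)) (msOP S)
      (fun p => p.1.1 (clamp t p.2)) := by
  classical
  letI : MeasurableSpace (OnePoint S) := msOP S
  haveI : BorelSpace (OnePoint S) := ⟨rfl⟩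
  letI : MeasurableSpace (DexpT S) := filt (Subtype.val : DexpT S → Path S) t
  letI : MeasurableSpace ℝ := borel ℝ
  haveI : BorelSpace ℝ := ⟨rfl⟩
  set g : ℕ → DexpT S × ℝ → OnePoint S := fun n p => p.1.1 (dyad t n (max p.2 0)) with hg
  have hgm : ∀ n, Measurable (g n) := by
    intro n
    intro B hB
    have heq : g n ⁻¹' B = ⋃ v ∈ range (fun k : ℕ => min t ((k:ℝ)/2^n)),
        ({x : DexpT S | x.1 v ∈ B} ×ˢ {s : ℝ | dyad t n (max s 0) = v}) := by
      ext p
      simp only [mem_preimage, mem_iUnion, mem_prod, mem_setOf_eq, hg]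
      constructor
      · intro hp
        exact ⟨dyad t n (max p.2 0), ⟨⌈(max p.2 0) * 2 ^ n⌉₊, rfl⟩, by rwa [], rfl⟩
      · rintro ⟨v, -, hxB, hv⟩
        rw [hv]; exact hxB
    rw [heq]
    refine MeasurableSet.biUnion (countable_range _) fun v hv => ?_
    obtain ⟨k, rfl⟩ := hv
    refine MeasurableSet.prod ?_ ?_
    · exact measurable_eval (Subtype.val : DexpT S → Path S)
        ⟨le_min ht (by positivity), min_le_left _ _⟩ hB
    · have hmono : Monotone (fun s : ℝ => dyad t n (max s 0)) :=
        (dyad_monotone t n).comp (fun a b hab => max_le_max hab le_rfl)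
      exact hmono.measurable (measurableSet_singleton _)
  have hconv : ∀ p : DexpT S × ℝ, Tendsto (fun n => g n p) atTop (𝓝 (p.1.1 (clamp t p.2))) := by
    rintro ⟨x, s⟩
    have hm0 : (0:ℝ) ≤ max s 0 := le_max_right _ _
    rcases le_or_gt (max s 0) t with hmt | hmt
    · have hclamp : clamp t s = max s 0 := min_eq_left hmt
      rw [hclamp]
      exact tendsto_eval_right x hm0 (fun n => dyad_ge n hm0 hmt) (tendsto_dyad hm0 hmt)
    · have hclamp : clamp t s = t := min_eq_right hmt.le
      have hdy : ∀ n, dyad t n (max s 0) = t := by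
        intro n
        refine min_eq_left (hmt.le.trans ?_)
        rw [le_div_iff₀ (by positivity : (0:ℝ) < 2^n)]
        exact Nat.le_ceil _
      rw [hclamp]
      have : (fun n => g n (x, s)) = fun _ => x.1 t := by
        funext n; simp only [hg]; rw [hdy]
      rw [this]
      exact tendsto_const_nhds
  exact measurable_of_tendsto_metrizable' atTop hgm (tendsto_pi_nhds.2 hconv)

open Classical in
/-- The Borel modification of `h` vanishing off `𝒰`. -/
def hBor {X : Type*} (𝒰 : Set X) (h : X → ℝ) : X → ℝ := fun p =>
  if p ∈ 𝒰 then h p else 0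

open Classical in
/-- Extension of a function on `S × S` to `S^Δ × S^Δ`. -/
def extOP (f : S × S → ℝ≥0∞) : OnePoint S × OnePoint S → ℝ≥0∞ :=
  Function.extend (Prod.map (fun a : S => (a : OnePoint S)) (fun a : S => (a : OnePoint S)))
    f (fun _ => 0)

theorem extOP_coe (f : S × S → ℝ≥0∞) (a b : S) :
    extOP f ((a : OnePoint S), (b : OnePoint S)) = f (a, b) := by
  rw [extOP]
  exact Function.Injective.extend_apply
    (OnePoint.coe_injective.prodMap OnePoint.coe_injective) _ _ (a, b)

theorem measurable_extOP [MeasurableSpace S] [BorelSpace S]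
    [MeasurableSpace (OnePoint S)] [BorelSpace (OnePoint S)]
    {f : S × S → ℝ≥0∞} (hf : Measurable f) : Measurable (extOP f) := by
  have hemb : MeasurableEmbedding
      (Prod.map (fun a : S => (a : OnePoint S)) (fun a : S => (a : OnePoint S))) :=
    (OnePoint.isOpenEmbedding_coe.prodMap OnePoint.isOpenEmbedding_coe).measurableEmbedding
  exact hemb.measurable_extend hf measurable_const

theorem measurable_hBor {X : Type*} [TopologicalSpace X] [MeasurableSpace X] [BorelSpace X]
    {𝒰 : Set X} (h𝒰 : IsOpen 𝒰) {h : X → ℝ}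
    (hcont : ContinuousOn h 𝒰) : Measurable (hBor 𝒰 h) := by
  classical
  have heq : hBor 𝒰 h = 𝒰.piecewise h 0 := by
    funext p
    by_cases hp : p ∈ 𝒰
    · rw [hBor]; rw [if_pos hp, Set.piecewise_eq_of_mem _ _ _ hp]
    · rw [hBor]; rw [if_neg hp, Set.piecewise_eq_of_notMem _ _ _ hp]; rfl
  rw [heq]
  exact ContinuousOn.measurable_piecewise hcont continuousOn_const h𝒰.measurableSet

/-- The measurable surrogate for `hInt`. -/
def hIntB (𝒰 : Set (S × S)) (h : S × S → ℝ) (τ₀ : DexpT S → ℝ≥0∞) (t : ℝ) (x : DexpT S) :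
    ℝ≥0∞ :=
  ∫⁻ s in Ioc (tval τ₀ t x) t,
    extOP (fun p => ENNReal.ofReal (hBor 𝒰 h p)) (Yval τ₀ t x, x.1 (clamp t s))

theorem measurable_hIntB {𝒰 : Set (S × S)} (h𝒰 : IsOpen 𝒰) {h : S × S → ℝ}
    (hcont : ContinuousOn h 𝒰) {τ₀ : DexpT S → ℝ≥0∞}
    (hτ₀ : IsStopping (Subtype.val : DexpT S → Path S) τ₀) {t : ℝ} (ht : 0 ≤ t) :
    @Measurable (DexpT S) ℝ≥0∞ (filt (Subtype.val : DexpT S → Path S) t) _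
      (hIntB 𝒰 h τ₀ t) := by
  classical
  letI : MeasurableSpace S := borel S
  haveI : BorelSpace S := ⟨rfl⟩
  letI : MeasurableSpace (OnePoint S) := msOP S
  haveI : BorelSpace (OnePoint S) := ⟨rfl⟩
  letI : MeasurableSpace (DexpT S) := filt (Subtype.val : DexpT S → Path S) t
  set F : DexpT S × ℝ → ℝ≥0∞ := fun p =>
    indicator {q : DexpT S × ℝ | tval τ₀ t q.1 < q.2 ∧ q.2 ≤ t}
      (fun q => extOP (fun r => ENNReal.ofReal (hBor 𝒰 h r))
        (Yval τ₀ t q.1, q.1.1 (clamp t q.2))) p with hF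
  have hFm : Measurable F := by
    refine Measurable.indicator ?_ ?_
    · refine Measurable.comp (measurable_extOP ?_) ?_
      · exact Measurable.ennreal_ofReal (measurable_hBor h𝒰 hcont)
      · refine Measurable.prodMk ?_ ?_
        · exact (measurable_Yval hτ₀ ht).comp measurable_fst
        · have hj := measurable_eval_prod (S := S) ht
          exact hj
    · refine MeasurableSet.inter ?_ ?_
      · exact measurableSet_lt ((measurable_tval hτ₀ ht).comp measurable_fst) measurable_snd
      · exact measurableSet_le measurable_snd measurable_const
  have hint : ∀ x : DexpT S, hIntB 𝒰 h τ₀ t x = ∫⁻ s, F (x, s) := by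
    intro x
    have : (fun s => F (x, s)) = (Ioc (tval τ₀ t x) t).indicator
        (fun s => extOP (fun r => ENNReal.ofReal (hBor 𝒰 h r)) (Yval τ₀ t x, x.1 (clamp t s))) := by
      funext s
      by_cases hs : s ∈ Ioc (tval τ₀ t x) t
      · have h1 : (x, s) ∈ {q : DexpT S × ℝ | tval τ₀ t q.1 < q.2 ∧ q.2 ≤ t} := ⟨hs.1, hs.2⟩
        simp only [hF, indicator_of_mem h1, indicator_of_mem hs]
      · have h1 : (x, s) ∉ {q : DexpT S × ℝ | tval τ₀ t q.1 < q.2 ∧ q.2 ≤ t} :=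
          fun hc => hs ⟨hc.1, hc.2⟩
        simp only [hF, indicator_of_notMem h1, indicator_of_notMem hs]
    rw [hIntB, ← lintegral_indicator measurableSet_Ioc, ← this]
  have : hIntB 𝒰 h τ₀ t = fun x => ∫⁻ s, F (x, s) := funext hint
  rw [this]
  exact Measurable.lintegral_prod_right' hFm


theorem pairSet_mono {τ₀ : DexpT S → ℝ≥0∞} (x : DexpT S) {t t' : ℝ} (h : t ≤ t') :
    pairSet τ₀ x t ⊆ pairSet τ₀ x t' := by
  rintro p ⟨h1, s, hs1, hs2, hs3⟩
  exact ⟨h1, s, hs1, hs2.trans h, hs3⟩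

theorem pairOK_antitone {𝒰 : Set (S × S)} {τ₀ : DexpT S → ℝ≥0∞} (x : DexpT S) {t t' : ℝ}
    (h : t ≤ t') (hOK : pairOK 𝒰 τ₀ x t') : pairOK 𝒰 τ₀ x t := by
  obtain ⟨h1, h2, h3, h4⟩ := hOK
  have hsub : closure (pairSet τ₀ x t) ⊆ closure (pairSet τ₀ x t') :=
    closure_mono (pairSet_mono x h)
  exact ⟨h1, fun s hs1 hs2 => h2 s hs1 (hs2.trans h),
    h3.of_isClosed_subset isClosed_closure hsub, hsub.trans h4⟩

theorem hInt_mono {h : S × S → ℝ} {τ₀ : DexpT S → ℝ≥0∞} (x : DexpT S) {t t' : ℝ}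
    (hle : t ≤ t') : hInt h τ₀ x t ≤ hInt h τ₀ x t' :=
  lintegral_mono_set (Ioc_subset_Ioc le_rfl hle)

/-- The index set of the infimum defining `tauHit`. -/
def hitSet (𝒰 : Set (S × S)) (h : S × S → ℝ) (τ₀ : DexpT S → ℝ≥0∞) (M : DexpT S → ℝ≥0∞)
    (x : DexpT S) : Set ℝ :=
  {t : ℝ | 0 ≤ t ∧ τ₀ x ≤ ENNReal.ofReal t ∧
      (¬ pairOK 𝒰 τ₀ x t ∨ M x ≤ hInt h τ₀ x t)}

theorem tauHit_eq (𝒰 : Set (S × S)) (h : S × S → ℝ) (τ₀ : DexpT S → ℝ≥0∞)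
    (M : DexpT S → ℝ≥0∞) (x : DexpT S) :
    tauHit 𝒰 h τ₀ M x = ⨅ t ∈ hitSet 𝒰 h τ₀ M x, ENNReal.ofReal t := rfl

theorem hitSet_upClosed {𝒰 : Set (S × S)} {h : S × S → ℝ} {τ₀ M : DexpT S → ℝ≥0∞}
    {x : DexpT S} {t t' : ℝ} (hmem : t ∈ hitSet 𝒰 h τ₀ M x) (hle : t ≤ t') :
    t' ∈ hitSet 𝒰 h τ₀ M x := by
  obtain ⟨h0, hτ, hdisj⟩ := hmem
  refine ⟨h0.trans hle, hτ.trans (ENNReal.ofReal_le_ofReal hle), ?_⟩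
  rcases hdisj with hn | hM
  · exact Or.inl fun hOK => hn (pairOK_antitone x hle hOK)
  · exact Or.inr (hM.trans (hInt_mono x hle))

theorem hInt_bound {𝒰 : Set (S × S)} {h : S × S → ℝ} (hcont : ContinuousOn h 𝒰)
    {τ₀ : DexpT S → ℝ≥0∞} {x : DexpT S} {t : ℝ}
    (hOK : pairOK 𝒰 τ₀ x t) :
    ∃ C : ℝ, 0 ≤ C ∧
      (∀ s ∈ Ioc ((τ₀ x).toReal) t,
        ENNReal.ofReal (hOP h (evalE x.1 (τ₀ x)) (x.1 s)) ≤ ENNReal.ofReal C) ∧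
      hInt h τ₀ x t ≤ ENNReal.ofReal C * ENNReal.ofReal (t - (τ₀ x).toReal) := by
  obtain ⟨h1, h2, h3, h4⟩ := hOK
  obtain ⟨C₀, hC₀⟩ := h3.exists_bound_of_continuousOn (hcont.mono h4)
  set C : ℝ := max C₀ 0 with hC
  have hC0 : 0 ≤ C := le_max_right _ _
  have hbd : ∀ s ∈ Ioc ((τ₀ x).toReal) t,
      ENNReal.ofReal (hOP h (evalE x.1 (τ₀ x)) (x.1 s)) ≤ ENNReal.ofReal C := by
    intro s hs
    obtain ⟨b, hb⟩ := OnePoint.ne_infty_iff_exists.1 h1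
    obtain ⟨a, ha⟩ := OnePoint.ne_infty_iff_exists.1 (h2 s hs.1.le hs.2)
    have hpair : (b, a) ∈ pairSet τ₀ x t := ⟨hb.symm, s, hs.1.le, hs.2, ha.symm⟩
    have hmem : (b, a) ∈ closure (pairSet τ₀ x t) := subset_closure hpair
    have hble : h (b, a) ≤ C := by
      have := hC₀ (b, a) hmem
      rw [Real.norm_eq_abs] at this
      exact (le_abs_self _).trans (this.trans (le_max_left _ _))
    rw [← hb, ← ha]
    exact ENNReal.ofReal_le_ofReal (by exact hble)
  refine ⟨C, hC0, hbd, ?_⟩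
  calc hInt h τ₀ x t ≤ ∫⁻ _ in Ioc ((τ₀ x).toReal) t, ENNReal.ofReal C :=
        setLIntegral_mono' measurableSet_Ioc hbd
    _ = ENNReal.ofReal C * volume (Ioc ((τ₀ x).toReal) t) := setLIntegral_const _ _
    _ = ENNReal.ofReal C * ENNReal.ofReal (t - (τ₀ x).toReal) := by rw [Real.volume_Ioc]

theorem hInt_split {h : S × S → ℝ} {τ₀ : DexpT S → ℝ≥0∞} (x : DexpT S) {t t' : ℝ}
    (h1 : (τ₀ x).toReal ≤ t) (h2 : t ≤ t') :
    hInt h τ₀ x t' = hInt h τ₀ x t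
      + ∫⁻ s in Ioc t t', ENNReal.ofReal (hOP h (evalE x.1 (τ₀ x)) (x.1 s)) := by
  rw [hInt, hInt, ← Ioc_union_Ioc_eq_Ioc h1 h2,
    lintegral_union measurableSet_Ioc (Ioc_disjoint_Ioc_of_le le_rfl)]

theorem ennreal_le_iff_forall_rat {c f : ℝ≥0∞} :
    c ≤ f ↔ ∀ q : ℚ, 0 ≤ q → f ≤ ENNReal.ofReal q → c ≤ ENNReal.ofReal q := by
  constructor
  · exact fun hcf q _ hfq => hcf.trans hfq
  · intro hq
    by_contra hcf
    rw [not_le] at hcf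
    obtain ⟨q, hq0, hfq, hqc⟩ := ENNReal.lt_iff_exists_rat_btwn.1 hcf
    have h1 : f ≤ ENNReal.ofReal q := by
      rw [ENNReal.ofReal]
      exact hfq.le
    have h2 : c ≤ ENNReal.ofReal q := hq q hq0 h1
    rw [ENNReal.ofReal] at h2
    exact absurd (h2.trans_lt hqc) (lt_irrefl _)

theorem ennreal_exists_add_pos {a b : ℝ≥0∞} (hab : a < b) (ha : a ≠ ⊤) :
    ∃ r : ℝ, 0 < r ∧ a + ENNReal.ofReal r < b := by
  obtain ⟨c, hac, hcb⟩ := exists_between hab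
  have hc : c ≠ ⊤ := (hcb.trans_le le_top).ne
  refine ⟨(c - a).toReal, ?_, ?_⟩
  · simp [ENNReal.toReal_pos_iff, tsub_pos_iff_lt, hac, lt_of_le_of_lt tsub_le_self (hc.lt_top)]
  · calc a + ENNReal.ofReal (c - a).toReal = a + (c - a) := by
          rw [ENNReal.ofReal_toReal (by simp [ENNReal.sub_ne_top hc])]
        _ = c := by rw [add_tsub_cancel_of_le hac.le]
        _ < b := hcb

theorem hInt_eq_hIntB {𝒰 : Set (S × S)} {h : S × S → ℝ} {τ₀ : DexpT S → ℝ≥0∞}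
    (x : DexpT S) {t : ℝ} (ht : 0 ≤ t) (hτ : τ₀ x ≤ ENNReal.ofReal t)
    (hOK : pairOK 𝒰 τ₀ x t) : hInt h τ₀ x t = hIntB 𝒰 h τ₀ t x := by
  have htv : tval τ₀ t x = (τ₀ x).toReal := if_pos hτ
  have hYv : Yval τ₀ t x = evalE x.1 (τ₀ x) := if_pos hτ
  rw [hInt, hIntB, htv, hYv]
  refine setLIntegral_congr_fun measurableSet_Ioc (fun s hs => ?_)
  have hs0 : 0 ≤ s := ENNReal.toReal_nonneg.trans hs.1.le
  have hclamp : clamp t s = s := by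
    rw [clamp, max_eq_left hs0, min_eq_left hs.2]
  rw [hclamp]
  obtain ⟨b, hb⟩ := OnePoint.ne_infty_iff_exists.1 hOK.1
  obtain ⟨a, ha⟩ := OnePoint.ne_infty_iff_exists.1 (hOK.2.1 s hs.1.le hs.2)
  have hpair : (b, a) ∈ pairSet τ₀ x t := ⟨hb.symm, s, hs.1.le, hs.2, ha.symm⟩
  have hmem : (b, a) ∈ 𝒰 := hOK.2.2.2 (subset_closure hpair)
  rw [← hb, ← ha]
  have h1 : extOP (fun r => ENNReal.ofReal (hBor 𝒰 h r)) ((b : OnePoint S), (a : OnePoint S))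
      = ENNReal.ofReal (hBor 𝒰 h (b, a)) := extOP_coe _ b a
  rw [h1, hBor, if_pos hmem]
  rfl


/-- Right-approximation by rational sampling times, for pairs. -/
theorem pair_mem_of_rat_right (x : DexpT S) (c : OnePoint S) {r t : ℝ} (hr : 0 ≤ r)
    (hrt : r < t) (hx : x.1 r ≠ OnePoint.infty)
    {A : Set (OnePoint S × OnePoint S)} (hA : IsClosed A)
    (hq : ∀ q ∈ Dset t, r < q → (c, x.1 q) ∈ A) : (c, x.1 r) ∈ A := by
  set s : Set ℝ := Ioo r t ∩ range (fun q : ℚ => (q : ℝ)) with hs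
  have hne : (𝓝[s] r).NeBot := by
    rw [mem_closure_iff_nhdsWithin_neBot.symm]
    rw [mem_closure_iff]
    intro o ho hro
    obtain ⟨ε, hε, hball⟩ := Metric.isOpen_iff.1 ho r hro
    obtain ⟨q, hq1, hq2⟩ := exists_rat_btwn (show r < min t (r + ε) by
      simp [hrt, hε])
    refine ⟨q, hball ?_, ⟨hq1, (hq2.trans_le (min_le_left _ _))⟩, ⟨q, rfl⟩⟩
    rw [Metric.mem_ball, Real.dist_eq, abs_lt]
    constructor <;> nlinarith [hq2.trans_le (min_le_right _ _)]
  have htend : Tendsto (fun u => (c, x.1 u)) (𝓝[s] r) (𝓝 (c, x.1 r)) := by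
    refine Tendsto.prodMk_nhds tendsto_const_nhds ?_
    exact (x.2.2.2.2.1 r hr hx).mono_left (nhdsWithin_mono _ (fun u hu => hu.1.1))
  refine hA.mem_of_tendsto htend ?_
  filter_upwards [self_mem_nhdsWithin] with u hu
  exact hq u (Or.inr ⟨⟨hr.trans hu.1.1.le, hu.1.2.le⟩, hu.2⟩) hu.1.1

/-- Countable characterization of `pairOK`. -/
theorem pairOK_iff {𝒰 : Set (S × S)} (h𝒰 : IsOpen 𝒰) {W : ℕ → Set (S × S)}
    (hWo : ∀ m, IsOpen (W m)) (hWc : ∀ m, IsCompact (closure (W m)))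
    (hWU : ∀ m, closure (W m) ⊆ 𝒰)
    (hWcov : ∀ L : Set (S × S), IsCompact L → L ⊆ 𝒰 → ∃ m, L ⊆ W m)
    {τ₀ : DexpT S → ℝ≥0∞} (x : DexpT S) {t : ℝ} (ht : 0 ≤ t)
    (hτ : τ₀ x ≤ ENNReal.ofReal t) :
    pairOK 𝒰 τ₀ x t ↔ ∃ m, ∀ r ∈ Dset t, τ₀ x ≤ ENNReal.ofReal r →
      (evalE x.1 (τ₀ x), x.1 r) ∈
        (Prod.map (fun a : S => (a : OnePoint S)) (fun a : S => (a : OnePoint S))) '' (W m) := by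
  have hτne : τ₀ x ≠ ⊤ := ne_top_of_le_ne_top ENNReal.ofReal_ne_top hτ
  constructor
  · intro hOK
    obtain ⟨m, hm⟩ := hWcov (closure (pairSet τ₀ x t)) hOK.2.2.1 hOK.2.2.2
    refine ⟨m, fun r hr hτr => ?_⟩
    have hrIcc := Dset_subset t ht hr
    have htoR : (τ₀ x).toReal ≤ r := ENNReal.toReal_le_of_le_ofReal hrIcc.1 hτr
    obtain ⟨b, hb⟩ := OnePoint.ne_infty_iff_exists.1 hOK.1
    obtain ⟨a, ha⟩ := OnePoint.ne_infty_iff_exists.1 (hOK.2.1 r htoR hrIcc.2)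
    have hpair : (b, a) ∈ pairSet τ₀ x t := ⟨hb.symm, r, htoR, hrIcc.2, ha.symm⟩
    refine ⟨(b, a), hm (subset_closure hpair), ?_⟩
    simp only [Prod.map_apply]
    rw [hb, ha]
  · rintro ⟨m, hm⟩
    -- the value at time `t`
    have hmt := hm t (Or.inl rfl) hτ
    obtain ⟨⟨w1, w2⟩, hw, hweq⟩ := hmt
    have hb : evalE x.1 (τ₀ x) = (w1 : OnePoint S) := by
      simpa using congrArg Prod.fst hweq.symm
    have hxt : x.1 t = (w2 : OnePoint S) := by
      simpa using congrArg Prod.snd hweq.symm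
    have hevne : evalE x.1 (τ₀ x) ≠ OnePoint.infty := by
      rw [hb]; exact OnePoint.coe_ne_infty _
    have hxtne : x.1 t ≠ OnePoint.infty := by
      rw [hxt]; exact OnePoint.coe_ne_infty _
    have hnoinf : ∀ s : ℝ, (τ₀ x).toReal ≤ s → s ≤ t → x.1 s ≠ OnePoint.infty :=
      fun s _ hst he => hxtne (x.2.2.1 hst he)
    -- the pair set is contained in `closure (W m)`
    set K' : Set (S × S) := closure (W m) with hK'
    have hWK : (Prod.map (fun a : S => (a : OnePoint S)) (fun a : S => (a : OnePoint S))) '' (W m)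
        ⊆ (Prod.map (fun a : S => (a : OnePoint S)) (fun a : S => (a : OnePoint S))) '' K' :=
      image_mono subset_closure
    have hK'img : IsClosed ((Prod.map (fun a : S => (a : OnePoint S))
        (fun a : S => (a : OnePoint S))) '' K') :=
      (((hWc m).image ((OnePoint.continuous_coe).prodMap (OnePoint.continuous_coe)))).isClosed
    have hsub : pairSet τ₀ x t ⊆ K' := by
      rintro ⟨p₁, p₂⟩ ⟨hp₁, s, hs1, hs2, hp₂⟩
      rcases eq_or_lt_of_le hs2 with rfl | hst
      · -- time `s = t`
        have h1 : p₁ = w1 := OnePoint.coe_injective (hp₁.symm.trans hb)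
        have h2 : p₂ = w2 := OnePoint.coe_injective (hp₂.symm.trans hxt)
        rw [h1, h2]
        exact subset_closure hw
      · have hs0 : 0 ≤ s := ENNReal.toReal_nonneg.trans hs1
        have hmem : (evalE x.1 (τ₀ x), x.1 s) ∈ (Prod.map (fun a : S => (a : OnePoint S))
            (fun a : S => (a : OnePoint S))) '' K' := by
          refine pair_mem_of_rat_right x _ hs0 hst (hnoinf s hs1 hs2) hK'img ?_
          intro q hq hsq
          have hqIcc := Dset_subset t ht hq
          have hτq : τ₀ x ≤ ENNReal.ofReal q := by
            rw [ENNReal.le_ofReal_iff_toReal_le hτne hqIcc.1]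
            exact hs1.trans hsq.le
          exact hWK (hm q hq hτq)
        obtain ⟨⟨v1, v2⟩, hv, hveq⟩ := hmem
        have h1 : p₁ = v1 := OnePoint.coe_injective
          (hp₁.symm.trans (by simpa using congrArg Prod.fst hveq.symm))
        have h2 : p₂ = v2 := OnePoint.coe_injective
          (hp₂.symm.trans (by simpa using congrArg Prod.snd hveq.symm))
        rw [h1, h2]
        exact hv
    have hclsub : closure (pairSet τ₀ x t) ⊆ K' := closure_minimal hsub isClosed_closure
    exact ⟨hevne, hnoinf, (hWc m).of_isClosed_subset isClosed_closure hclsub,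
      hclsub.trans (hWU m)⟩


/-- Characterization of `tauHit ≤ t`. -/
theorem tauHit_le_iff {𝒰 : Set (S × S)} (h𝒰 : IsOpen 𝒰) {h : S × S → ℝ}
    (hcont : ContinuousOn h 𝒰) {τ₀ M : DexpT S → ℝ≥0∞} (x : DexpT S) {t : ℝ} (ht : 0 ≤ t) :
    tauHit 𝒰 h τ₀ M x ≤ ENNReal.ofReal t ↔ t ∈ hitSet 𝒰 h τ₀ M x := by
  constructor
  · intro hle
    by_cases hex : ∃ s ∈ hitSet 𝒰 h τ₀ M x, s ≤ t
    · obtain ⟨s, hs, hst⟩ := hex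
      exact hitSet_upClosed hs hst
    push_neg at hex
    have hinf : ∀ ε : ℝ, 0 < ε → ∃ s ∈ hitSet 𝒰 h τ₀ M x, s < t + ε := by
      intro ε hε
      by_contra hc
      push_neg at hc
      have h1 : ENNReal.ofReal (t + ε) ≤ tauHit 𝒰 h τ₀ M x :=
        le_iInf₂ fun s hs => ENNReal.ofReal_le_ofReal (hc s hs)
      have h2 : ENNReal.ofReal t < ENNReal.ofReal (t + ε) :=
        (ENNReal.ofReal_lt_ofReal_iff (by linarith)).2 (by linarith)
      exact absurd ((h1.trans hle).trans_lt h2) (lt_irrefl _)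
    have hτt : τ₀ x ≤ ENNReal.ofReal t := by
      refine ENNReal.le_of_forall_pos_le_add fun ε hε _ => ?_
      obtain ⟨s, hs, hst⟩ := hinf ε (by exact_mod_cast hε)
      calc τ₀ x ≤ ENNReal.ofReal s := hs.2.1
        _ ≤ ENNReal.ofReal (t + ε) := ENNReal.ofReal_le_ofReal hst.le
        _ = ENNReal.ofReal t + ENNReal.ofReal ε :=
            ENNReal.ofReal_add ht (by exact_mod_cast hε.le)
        _ = ENNReal.ofReal t + ε := by rw [ENNReal.ofReal_coe_nnreal]
    refine ⟨ht, hτt, ?_⟩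
    by_contra hcon
    push_neg at hcon
    obtain ⟨hOK, hMlt⟩ := hcon
    -- setup around the value at time `t`
    have hτtoR : (τ₀ x).toReal ≤ t := ENNReal.toReal_le_of_le_ofReal ht hτt
    obtain ⟨b₀, hb₀⟩ := OnePoint.ne_infty_iff_exists.1 hOK.1
    obtain ⟨a_t, hat⟩ := OnePoint.ne_infty_iff_exists.1 (hOK.2.1 t hτtoR le_rfl)
    have hpair_t : (b₀, a_t) ∈ 𝒰 :=
      hOK.2.2.2 (subset_closure ⟨hb₀.symm, t, hτtoR, le_rfl, hat.symm⟩)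
    obtain ⟨u, v, hu, hv, hbu, hav, huv⟩ := isOpen_prod_iff.1 h𝒰 b₀ a_t hpair_t
    obtain ⟨N, hNc, haN, hNv⟩ := exists_compact_subset hv hav
    have hrc : Tendsto x.1 (𝓝[>] t) (𝓝 ((a_t : OnePoint S))) := by
      rw [hat]
      exact x.2.2.2.2.1 t ht (hOK.2.1 t hτtoR le_rfl)
    have hmemN : (OnePoint.some '' interior N) ∈ 𝓝 ((a_t : OnePoint S)) :=
      (OnePoint.isOpenMap_coe _ isOpen_interior).mem_nhds ⟨a_t, haN, rfl⟩
    obtain ⟨δ, hδt, hδ⟩ := (nhdsGT_basis t).mem_iff.1 (hrc hmemN)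
    -- finiteness of `hInt` at `t` and the gap `γ`
    obtain ⟨C, hC0, hCbd, hCle⟩ := hInt_bound hcont hOK
    have hfin : hInt h τ₀ x t ≠ ⊤ := by
      refine ne_top_of_le_ne_top ?_ hCle
      exact (ENNReal.mul_lt_top ENNReal.ofReal_lt_top ENNReal.ofReal_lt_top).ne
    obtain ⟨γ, hγ0, hγ⟩ := ennreal_exists_add_pos hMlt hfin
    -- uniform bound on `h` over the enlarged compact set
    set Kbig : Set (S × S) := closure (pairSet τ₀ x t) ∪ ({b₀} ×ˢ N) with hKbig
    have hKbigc : IsCompact Kbig := hOK.2.2.1.union (isCompact_singleton.prod hNc)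
    have hKbigU : Kbig ⊆ 𝒰 := by
      rintro p (hp | hp)
      · exact hOK.2.2.2 hp
      · exact huv ⟨by rw [show p.1 = b₀ from hp.1]; exact hbu, hNv hp.2⟩
    obtain ⟨C₂', hC₂'⟩ := hKbigc.exists_bound_of_continuousOn (hcont.mono hKbigU)
    set C₂ : ℝ := max C₂' 0 with hC₂
    have hC₂0 : 0 ≤ C₂ := le_max_right _ _
    have hbd : ∀ p ∈ Kbig, h p ≤ C₂ := by
      intro p hp
      have := hC₂' p hp
      rw [Real.norm_eq_abs] at this
      exact (le_abs_self _).trans (this.trans (le_max_left _ _))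
    -- choose a time in the hit set close to `t`
    set ε₀ : ℝ := min (δ - t) (γ / (C₂ + 1)) with hε₀
    have hε₀0 : 0 < ε₀ := lt_min (by linarith) (div_pos hγ0 (by linarith))
    obtain ⟨s', hs', hs't⟩ := hinf ε₀ hε₀0
    have hts' : t < s' := hex s' hs'
    have hs'δ : s' < δ := by
      have := min_le_left (δ - t) (γ / (C₂ + 1))
      linarith [hs't, this]
    have hs'γ : s' - t < γ / (C₂ + 1) := by
      have := min_le_right (δ - t) (γ / (C₂ + 1))
      linarith [hs't, this]
    -- all values on `(t, s']` lie in `N`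
    have hval : ∀ s : ℝ, t < s → s ≤ s' → ∃ a ∈ N, x.1 s = (a : OnePoint S) := by
      intro s hs1 hs2
      obtain ⟨a, ha, hax⟩ := hδ ⟨hs1, lt_of_le_of_lt hs2 hs'δ⟩
      exact ⟨a, interior_subset ha, hax.symm⟩
    -- `pairOK` holds at `s'`
    have hOK' : pairOK 𝒰 τ₀ x s' := by
      refine ⟨hOK.1, ?_, ?_, ?_⟩
      · intro s hs1 hs2
        rcases le_or_gt s t with hst | hst
        · exact hOK.2.1 s hs1 hst
        · obtain ⟨a, -, hax⟩ := hval s hst hs2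
          rw [hax]
          exact OnePoint.coe_ne_infty a
      all_goals {
        have hsub : pairSet τ₀ x s' ⊆ Kbig := by
          rintro ⟨p₁, p₂⟩ ⟨hp₁, s, hs1, hs2, hp₂⟩
          rcases le_or_gt s t with hst | hst
          · exact Or.inl (subset_closure ⟨hp₁, s, hs1, hst, hp₂⟩)
          · obtain ⟨a, haN', hax⟩ := hval s hst hs2
            have h1 : p₁ = b₀ := OnePoint.coe_injective (hp₁.symm.trans hb₀.symm)
            have h2 : p₂ = a := OnePoint.coe_injective (hp₂.symm.trans hax)
            exact Or.inr ⟨by rw [h1]; rfl, by rw [h2]; exact haN'⟩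
        have hclsub : closure (pairSet τ₀ x s') ⊆ Kbig :=
          closure_minimal hsub hKbigc.isClosed
        first
          | exact hKbigc.of_isClosed_subset isClosed_closure hclsub
          | exact hclsub.trans hKbigU }
    -- `hInt` at `s'` is still below `M`
    have hIlt : hInt h τ₀ x s' < M x := by
      have hsplit := hInt_split (h := h) x hτtoR hts'.le
      have hbd2 : ∀ s ∈ Ioc t s',
          ENNReal.ofReal (hOP h (evalE x.1 (τ₀ x)) (x.1 s)) ≤ ENNReal.ofReal C₂ := by
        intro s hs
        obtain ⟨a, haN', hax⟩ := hval s hs.1 hs.2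
        have hpair : (b₀, a) ∈ Kbig := Or.inr ⟨rfl, haN'⟩
        rw [← hb₀, hax]
        exact ENNReal.ofReal_le_ofReal (by exact hbd _ hpair)
      have htail : (∫⁻ s in Ioc t s', ENNReal.ofReal (hOP h (evalE x.1 (τ₀ x)) (x.1 s)))
          ≤ ENNReal.ofReal C₂ * ENNReal.ofReal (s' - t) := by
        calc (∫⁻ s in Ioc t s', ENNReal.ofReal (hOP h (evalE x.1 (τ₀ x)) (x.1 s)))
            ≤ ∫⁻ _ in Ioc t s', ENNReal.ofReal C₂ := setLIntegral_mono' measurableSet_Ioc hbd2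
          _ = ENNReal.ofReal C₂ * volume (Ioc t s') := setLIntegral_const _ _
          _ = ENNReal.ofReal C₂ * ENNReal.ofReal (s' - t) := by rw [Real.volume_Ioc]
      have hsmall : ENNReal.ofReal C₂ * ENNReal.ofReal (s' - t) < ENNReal.ofReal γ := by
        rw [← ENNReal.ofReal_mul hC₂0]
        refine (ENNReal.ofReal_lt_ofReal_iff hγ0).2 ?_
        have h1 : C₂ * (s' - t) ≤ C₂ * (γ / (C₂ + 1)) :=
          mul_le_mul_of_nonneg_left hs'γ.le hC₂0
        have h2 : C₂ * (γ / (C₂ + 1)) < γ := by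
          rw [mul_div_assoc']
          rw [div_lt_iff₀ (by linarith)]
          nlinarith
        linarith
      calc hInt h τ₀ x s' ≤ hInt h τ₀ x t + ENNReal.ofReal C₂ * ENNReal.ofReal (s' - t) := by
            rw [hsplit]; exact add_le_add_right htail _
        _ < hInt h τ₀ x t + ENNReal.ofReal γ := by
            refine ENNReal.add_lt_add_left hfin hsmall
        _ < M x := hγ
    rcases hs'.2.2 with hn | hM'
    · exact hn hOK'
    · exact absurd (hM'.trans_lt hIlt) (lt_irrefl _)
  · intro hmem
    exact iInf₂_le_of_le t hmem le_rfl


theorem tauHit_isStopping_aux {𝒰 : Set (S × S)} (h𝒰 : IsOpen 𝒰) {h : S × S → ℝ}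
    (hcont : ContinuousOn h 𝒰) {τ₀ : DexpT S → ℝ≥0∞}
    (hτ₀ : IsStopping (Subtype.val : DexpT S → Path S) τ₀) {M : DexpT S → ℝ≥0∞}
    (hM : ∀ (c : ℝ≥0∞) (t : ℝ), 0 ≤ t →
      MeasurableSet[filt (Subtype.val : DexpT S → Path S) t]
        ({x : DexpT S | M x ≤ c} ∩ {x : DexpT S | τ₀ x ≤ ENNReal.ofReal t})) :
    IsStopping (Subtype.val : DexpT S → Path S) (tauHit 𝒰 h τ₀ M) := by
  intro t ht
  show MeasurableSet[filt (Subtype.val : DexpT S → Path S) t]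
    {x : DexpT S | tauHit 𝒰 h τ₀ M x ≤ ENNReal.ofReal t}
  classical
  letI : MeasurableSpace S := borel S
  haveI : BorelSpace S := ⟨rfl⟩
  letI : MeasurableSpace (OnePoint S) := msOP S
  haveI : BorelSpace (OnePoint S) := ⟨rfl⟩
  letI : MeasurableSpace (DexpT S) := filt (Subtype.val : DexpT S → Path S) t
  obtain ⟨W, hWo, hWc, hWU, hWcov⟩ := exists_open_exhaustion h𝒰
  set Tset : Set (DexpT S) := {x : DexpT S | τ₀ x ≤ ENNReal.ofReal t} with hTset
  have hTm : MeasurableSet Tset := stopping_event_le hτ₀ ht le_rfl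
  set coeW : ℕ → Set (OnePoint S × OnePoint S) := fun m =>
    (Prod.map (fun a : S => (a : OnePoint S)) (fun a : S => (a : OnePoint S))) '' W m
    with hcoeW
  have hWopen : ∀ m, IsOpen (coeW m) :=
    fun m => (OnePoint.isOpenMap_coe.prodMap OnePoint.isOpenMap_coe) _ (hWo m)
  set Pset : Set (DexpT S) := ⋃ m, ⋂ r ∈ Dset t,
      ({x : DexpT S | τ₀ x ≤ ENNReal.ofReal r}ᶜ
        ∪ {x : DexpT S | (Yval τ₀ t x, x.1 r) ∈ coeW m}) with hPset
  have hPm : MeasurableSet Pset := by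
    refine MeasurableSet.iUnion fun m => ?_
    refine MeasurableSet.biInter (Dset_countable t) fun r hr => ?_
    refine MeasurableSet.union ?_ ?_
    · exact (stopping_event_le hτ₀ ht (Dset_subset t ht hr).2).compl
    · refine Measurable.prodMk (measurable_Yval hτ₀ ht)
        (measurable_eval (Subtype.val : DexpT S → Path S) (Dset_subset t ht hr))
        ((hWopen m).measurableSet)
  have hPiff : ∀ x ∈ Tset, (x ∈ Pset ↔ pairOK 𝒰 τ₀ x t) := by
    intro x hx
    rw [pairOK_iff h𝒰 hWo hWc hWU hWcov x ht hx]
    have hYv : Yval τ₀ t x = evalE x.1 (τ₀ x) := if_pos hx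
    simp only [hPset, mem_iUnion, mem_iInter, mem_union, mem_compl_iff, mem_setOf_eq, hYv]
    refine exists_congr fun m => forall_congr' fun r => forall_congr' fun hr => ?_
    rw [or_iff_not_imp_left, not_not]
  set Qset : Set (DexpT S) := ⋂ q : {q : ℚ // 0 ≤ q},
      ({x : DexpT S | hIntB 𝒰 h τ₀ t x ≤ ENNReal.ofReal (q.1 : ℝ)}ᶜ
        ∪ ({x : DexpT S | M x ≤ ENNReal.ofReal (q.1 : ℝ)} ∩ Tset)) with hQset
  have hQm : MeasurableSet Qset := by
    refine MeasurableSet.iInter fun q => ?_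
    refine MeasurableSet.union ?_ (hM _ t ht)
    exact (measurable_hIntB h𝒰 hcont hτ₀ ht measurableSet_Iic).compl
  have hQiff : ∀ x ∈ Tset, pairOK 𝒰 τ₀ x t → (x ∈ Qset ↔ M x ≤ hInt h τ₀ x t) := by
    intro x hx hOK
    rw [hInt_eq_hIntB x ht hx hOK, ennreal_le_iff_forall_rat]
    simp only [hQset, mem_iInter, mem_union, mem_compl_iff, mem_setOf_eq, mem_inter_iff]
    constructor
    · intro hq q hq0 hle
      rcases hq ⟨q, hq0⟩ with hn | ⟨hMq, -⟩
      · exact absurd hle hn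
      · exact hMq
    · intro hq q
      rw [or_iff_not_imp_left, not_not]
      intro hle
      exact ⟨hq q.1 q.2 hle, hx⟩
  have hset : {x : DexpT S | tauHit 𝒰 h τ₀ M x ≤ ENNReal.ofReal t}
      = (Tset ∩ Psetᶜ) ∪ (Tset ∩ Pset ∩ Qset) := by
    ext x
    rw [mem_setOf_eq, tauHit_le_iff h𝒰 hcont x ht]
    constructor
    · rintro ⟨h0, hτ, hd⟩
      have hxT : x ∈ Tset := hτ
      by_cases hOK : pairOK 𝒰 τ₀ x t
      · refine Or.inr ⟨⟨hxT, (hPiff x hxT).2 hOK⟩, ?_⟩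
        rcases hd with hn | hMle
        · exact absurd hOK hn
        · exact (hQiff x hxT hOK).2 hMle
      · exact Or.inl ⟨hxT, fun hxP => hOK ((hPiff x hxT).1 hxP)⟩
    · rintro (⟨hxT, hxP⟩ | ⟨⟨hxT, hxP⟩, hxQ⟩)
      · exact ⟨ht, hxT, Or.inl fun hOK => hxP ((hPiff x hxT).2 hOK)⟩
      · exact ⟨ht, hxT, Or.inr ((hQiff x hxT ((hPiff x hxT).1 hxP)).1 hxQ)⟩
  refine (congrArg (@MeasurableSet (DexpT S) (filt (Subtype.val : DexpT S → Path S) t)) hset).mpr ?_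
  exact (hTm.inter hPm.compl).union ((hTm.inter hPm).inter hQm)


/-- Corollary 2.3. For any `(𝓕_t)`-stopping time `τ₀`, any open
`𝒰 ⊆ S²`, any continuous `h ∈ C(𝒰, ℝ₊)` and any `𝓕_{τ₀}`-measurable `M : 𝔻_exp(S) → [0,∞]`,
the time `τ = inf {t ≥ τ₀ | {(X_{τ₀}, X_s)}_{τ₀ ≤ s ≤ t} ⋐̸ 𝒰 or ∫_{τ₀}^t h(X_{τ₀}, X_s) ds ≥ M}`
is an `(𝓕_t)`-stopping time.  In particular the explosion time `ξ` is an `(𝓕_t)`-stopping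
time, and for every open `U ⊆ S` the exit time `τ^U ≤ ξ` is an `(𝓕_t)`-stopping time. -/
theorem tauHit_isStopping
    (𝒰 : Set (S × S)) (h𝒰 : IsOpen 𝒰)
    (h : S × S → ℝ) (hcont : ContinuousOn h 𝒰) (hnonneg : ∀ p ∈ 𝒰, 0 ≤ h p)
    (τ₀ : DexpT S → ℝ≥0∞) (hτ₀ : IsStopping (Subtype.val : DexpT S → Path S) τ₀)
    (M : DexpT S → ℝ≥0∞)
    (hM : ∀ (c : ℝ≥0∞) (t : ℝ), 0 ≤ t →
      MeasurableSet[filt (Subtype.val : DexpT S → Path S) t]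
        ({x : DexpT S | M x ≤ c} ∩ {x : DexpT S | τ₀ x ≤ ENNReal.ofReal t})) :
    IsStopping (Subtype.val : DexpT S → Path S) (tauHit 𝒰 h τ₀ M) ∧
    IsStopping (Subtype.val : DexpT S → Path S) (fun x => xiE x.1) ∧
    (∀ U : Set S, IsOpen U →
      IsStopping (Subtype.val : DexpT S → Path S) (fun x => tauU U x.1) ∧
      ∀ x : DexpT S, tauU U x.1 ≤ xiE x.1) :=
  ⟨tauHit_isStopping_aux h𝒰 hcont hτ₀ hM, xiE_isStopping,
    fun U hU => ⟨tauU_isStopping hU, fun x => tauU_le_xiE' U x⟩⟩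

end LocSkor
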